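/- arXiv:0901.2451 — 3 statements merged into one kernel-verified Lean document; each statement's English description precedes it below -/
import Mathlib

section
/- Let (Z̄, T̄) be a fluid model solution under the maximum pressure policy with parameter α (α_i > 0 for all i), for limit network data (R, A) satisfying the heavy traffic and complete resource pooling assumptions. If Z̄(τ₁) = ζ^α · W̄(τ₁) for some τ₁ ≥ 0 (with W̄(t) = Σ_i y*_i Z̄_i(t)), then Z̄(t) = ζ^α · W̄(t) for all t ≥ τ₁. -/
open Finset

section Network

variable {I J K : Type*} [Fintype I] [Fintype J] [Fintype K] [DecidableEq J] [DecidableEq K]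

/-- Assumptions on the capacity consumption matrix `A`: entries in `{0,1}`;
input processors only work on input activities and service processors only on
service activities; every activity uses some processor.  Here `JI` is the set
of input activities (service activities are its complement) and `KI` the set
of input processors (service processors are its complement). -/
def NetData (A : K → J → ℝ) (JI : Finset J) (KI : Finset K) : Prop :=
  (∀ k j, A k j = 0 ∨ A k j = 1) ∧
  (∀ k j, ((k ∈ KI ∧ j ∉ JI) ∨ (k ∉ KI ∧ j ∈ JI)) → A k j = 0) ∧
  (∀ j, ∃ k, A k j = 1)

/-- The allocation set `𝒜`. -/
def Alloc (A : K → J → ℝ) (KI : Finset K) : Set (J → ℝ) :=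
  {a | (∀ j, 0 ≤ a j) ∧ (∀ k, ∑ j, A k j * a j ≤ 1) ∧ ∀ k ∈ KI, ∑ j, A k j * a j = 1}

/-- Feasibility for the static planning problem. -/
def SPPfeas (R : I → J → ℝ) (A : K → J → ℝ) (KI : Finset K) (ρ : ℝ) (x : J → ℝ) : Prop :=
  (∀ i, ∑ j, R i j * x j = 0) ∧ (∀ k ∈ KI, ∑ j, A k j * x j = 1) ∧
  (∀ k, k ∉ KI → ∑ j, A k j * x j ≤ ρ) ∧ (∀ j, 0 ≤ x j)

/-- Optimality for the static planning problem (minimize `ρ`). -/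
def SPPopt (R : I → J → ℝ) (A : K → J → ℝ) (KI : Finset K) (ρ : ℝ) (x : J → ℝ) : Prop :=
  SPPfeas R A KI ρ x ∧ ∀ ρ' x', SPPfeas R A KI ρ' x' → ρ ≤ ρ'

/-- Unique optimality for the static planning problem. -/
def SPPuniqueOpt (R : I → J → ℝ) (A : K → J → ℝ) (KI : Finset K) (ρ : ℝ) (x : J → ℝ) : Prop :=
  SPPopt R A KI ρ x ∧ ∀ ρ' x', SPPopt R A KI ρ' x' → ρ' = ρ ∧ x' = x

/-- Feasibility for the dual of the static planning problem. -/
def Dfeas (R : I → J → ℝ) (A : K → J → ℝ) (JI : Finset J) (KI : Finset K)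
    (y : I → ℝ) (z : K → ℝ) : Prop :=
  (∀ j ∈ JI, ∑ i, y i * R i j ≤ - ∑ k ∈ KI, z k * A k j) ∧
  (∀ j, j ∉ JI → ∑ i, y i * R i j ≤ ∑ k ∈ KIᶜ, z k * A k j) ∧
  (∑ k ∈ KIᶜ, z k = 1) ∧ (∀ k, k ∉ KI → 0 ≤ z k)

/-- Optimality for the dual problem (maximize `∑_{k ∈ KI} z k`). -/
def Dopt (R : I → J → ℝ) (A : K → J → ℝ) (JI : Finset J) (KI : Finset K)
    (y : I → ℝ) (z : K → ℝ) : Prop :=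
  Dfeas R A JI KI y z ∧
    ∀ y' z', Dfeas R A JI KI y' z' → ∑ k ∈ KI, z' k ≤ ∑ k ∈ KI, z k

/-- Unique optimality for the dual problem. -/
def DuniqueOpt (R : I → J → ℝ) (A : K → J → ℝ) (JI : Finset J) (KI : Finset K)
    (y : I → ℝ) (z : K → ℝ) : Prop :=
  Dopt R A JI KI y z ∧ ∀ y' z', Dopt R A JI KI y' z' → y' = y ∧ z' = z

end Network

/-- The lifting vector `ζ^α` determined by `α` and the dual optimum `y`. -/
noncomputable def zeta {I : Type*} [Fintype I] (α y : I → ℝ) : I → ℝ :=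
  fun i => (y i / α i) / ∑ i', (y i') ^ 2 / α i'

/-- A fluid model solution under the maximum pressure policy with parameter `α`. -/
def FluidSol {I J K : Type*} [Fintype I] [Fintype J] [Fintype K] [DecidableEq J] [DecidableEq K]
    (R : I → J → ℝ) (A : K → J → ℝ) (KI : Finset K) (α : I → ℝ)
    (Z : ℝ → I → ℝ) (T : ℝ → J → ℝ) : Prop :=
  (∀ t, 0 ≤ t → ∀ i, Z t i = Z 0 i - ∑ j, R i j * T t j) ∧
  (∀ t, 0 ≤ t → ∀ i, 0 ≤ Z t i) ∧
  (∀ s t, 0 ≤ s → s ≤ t → ∀ k ∈ KI, ∑ j, A k j * (T t j - T s j) = t - s) ∧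
  (∀ s t, 0 ≤ s → s ≤ t → ∀ k, ∑ j, A k j * (T t j - T s j) ≤ t - s) ∧
  (∀ s t, 0 ≤ s → s ≤ t → ∀ j, T s j ≤ T t j) ∧
  (∀ j, T 0 j = 0) ∧
  (∀ t, 0 < t → ∀ (Z' : I → ℝ) (T' : J → ℝ),
    (∀ i, HasDerivAt (fun s => Z s i) (Z' i) t) →
    (∀ j, HasDerivAt (fun s => T s j) (T' j) t) →
    ∑ i, α i * Z t i * ∑ j, R i j * T' j =
      sSup ((fun a => ∑ i, α i * Z t i * ∑ j, R i j * a j) '' Alloc A KI))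



/- ===== Auxiliary developments ===== -/


section Farkas
universe u v

def FarkasP (V : Type u) : Prop :=
  ∀ (_ : Fintype V), ∀ {L : Type v} [Fintype L] (M : L → V → ℝ) (b : L → ℝ),
    (¬ ∃ x : V → ℝ, ∀ l, ∑ v, M l v * x v ≤ b l) →
    ∃ u : L → ℝ, (∀ l, 0 ≤ u l) ∧ (∀ v, ∑ l, u l * M l v = 0) ∧ ∑ l, u l * b l < 0

lemma farkasP_pempty : FarkasP.{u, v} PEmpty := by
  intro _ L _ M b hinf
  classical
  have h0 : ∀ l, ∑ v : PEmpty, M l v * (0:ℝ) ≤ b l → True := fun _ _ => trivial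
  have : ¬ ∀ l, (0:ℝ) ≤ b l := by
    intro h
    exact hinf ⟨fun v => 0, fun l => by simpa using h l⟩
  push_neg at this
  obtain ⟨l, hl⟩ := this
  refine ⟨fun l' => if l' = l then 1 else 0, ?_, ?_, ?_⟩
  · intro l'; by_cases h : l' = l <;> simp [h]
  · intro v; exact v.elim
  · simp [ite_mul, hl]

lemma farkasP_equiv {α β : Type u} (e : α ≃ β) (h : FarkasP.{u, v} α) : FarkasP.{u, v} β := by
  intro instβ L instL M b hinf
  haveI : Fintype α := Fintype.ofEquiv β e.symm
  obtain ⟨u, hu0, huM, hub⟩ := h inferInstance (fun l a => M l (e a)) b (by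
    rintro ⟨x, hx⟩
    refine hinf ⟨fun v => x (e.symm v), fun l => ?_⟩
    have := hx l
    calc ∑ v, M l v * x (e.symm v) = ∑ a, M l (e a) * x (e.symm (e a)) :=
          (Equiv.sum_comp e (fun v => M l v * x (e.symm v))).symm
      _ ≤ b l := by simpa using this)
  refine ⟨u, hu0, fun v => ?_, hub⟩
  have := huM (e.symm v)
  simpa using this

lemma farkasP_option {α : Type u} [Fintype α] (IH : FarkasP.{u, v} α) :
    FarkasP.{u, v} (Option α) := by
  intro instO L instL M b hinf
  classical
  obtain rfl : instO = instFintypeOption := Subsingleton.elim _ _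
  set c : L → ℝ := fun l => M l none with hc
  set S : L → α → ℝ := fun l a => M l (some a) with hS
  -- the reduced system after eliminating the `none` variable
  set M' : ({l : L // c l = 0} ⊕ {l : L // 0 < c l} × {l : L // c l < 0}) → α → ℝ :=
    fun l' a => Sum.rec (fun l0 => S l0.1 a)
      (fun pq => S pq.1.1 a / c pq.1.1 - S pq.2.1 a / c pq.2.1) l' with hM'
  set b' : ({l : L // c l = 0} ⊕ {l : L // 0 < c l} × {l : L // c l < 0}) → ℝ :=
    fun l' => Sum.rec (fun l0 => b l0.1)
      (fun pq => b pq.1.1 / c pq.1.1 - b pq.2.1 / c pq.2.1) l' with hb'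
  have hinf' : ¬ ∃ x' : α → ℝ, ∀ l', ∑ a, M' l' a * x' a ≤ b' l' := by
    rintro ⟨x', hx'⟩
    have key : ∀ (p : {l : L // 0 < c l}) (q : {l : L // c l < 0}),
        (b q.1 - ∑ a, S q.1 a * x' a) / c q.1 ≤ (b p.1 - ∑ a, S p.1 a * x' a) / c p.1 := by
      intro p q
      have h := hx' (.inr (p, q))
      have hsum : ∑ a, M' (.inr (p, q)) a * x' a
          = (∑ a, S p.1 a * x' a) / c p.1 - (∑ a, S q.1 a * x' a) / c q.1 := by
        rw [Finset.sum_div, Finset.sum_div, ← Finset.sum_sub_distrib]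
        exact Finset.sum_congr rfl (fun a _ => by simp only [hM']; ring)
      rw [hsum] at h
      have hb'e : b' (.inr (p, q)) = b p.1 / c p.1 - b q.1 / c q.1 := rfl
      rw [hb'e] at h
      rw [sub_div, sub_div]
      linarith
    obtain ⟨x0, hx0P, hx0N⟩ : ∃ x0 : ℝ,
        (∀ p : {l : L // 0 < c l}, x0 ≤ (b p.1 - ∑ a, S p.1 a * x' a) / c p.1) ∧
        (∀ q : {l : L // c l < 0}, (b q.1 - ∑ a, S q.1 a * x' a) / c q.1 ≤ x0) := by
      by_cases hP : Nonempty {l : L // 0 < c l}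
      · exact ⟨Finset.univ.inf' Finset.univ_nonempty
            (fun p => (b p.1 - ∑ a, S p.1 a * x' a) / c p.1),
          fun p => Finset.inf'_le _ (Finset.mem_univ p),
          fun q => Finset.le_inf' _ _ (fun p _ => key p q)⟩
      · by_cases hN : Nonempty {l : L // c l < 0}
        · exact ⟨Finset.univ.sup' Finset.univ_nonempty
              (fun q : {l : L // c l < 0} => (b q.1 - ∑ a, S q.1 a * x' a) / c q.1),
            fun p => absurd ⟨p⟩ hP,
            fun q => Finset.le_sup'
              (fun q : {l : L // c l < 0} => (b q.1 - ∑ a, S q.1 a * x' a) / c q.1)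
              (Finset.mem_univ q)⟩
        · exact ⟨0, fun p => absurd ⟨p⟩ hP, fun q => absurd ⟨q⟩ hN⟩
    refine hinf ⟨fun v => v.elim x0 x', fun l => ?_⟩
    have hsplit : ∑ v : Option α, M l v * (v.elim x0 x')
        = c l * x0 + ∑ a, S l a * x' a := by
      rw [Fintype.sum_option]
      simp [hc, hS]
    rw [hsplit]
    rcases lt_trichotomy (c l) 0 with h | h | h
    · have := hx0N ⟨l, h⟩
      rw [div_le_iff_of_neg h] at this
      linarith
    · have := hx' (.inl ⟨l, h⟩)
      have h2 : ∑ a, M' (.inl ⟨l, h⟩) a * x' a = ∑ a, S l a * x' a := rfl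
      rw [h2] at this
      have h3 : b' (.inl ⟨l, h⟩) = b l := rfl
      rw [h3] at this
      rw [h, zero_mul, zero_add]
      exact this
    · have := hx0P ⟨l, h⟩
      rw [le_div_iff₀ h] at this
      linarith
  obtain ⟨u', hu'0, hu'M, hu'b⟩ := IH inferInstance M' b' hinf'
  set u : L → ℝ := fun l =>
    if h0 : c l = 0 then u' (.inl ⟨l, h0⟩)
    else if hp : 0 < c l then (∑ q : {l : L // c l < 0}, u' (.inr (⟨l, hp⟩, q))) / c l
    else (∑ p : {l : L // 0 < c l},
        u' (.inr (p, ⟨l, lt_of_le_of_ne (le_of_not_gt hp) h0⟩))) / (- c l) with hu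
  have hkey : ∀ w : L → ℝ, ∑ l, u l * w l
      = (∑ l0 : {l : L // c l = 0}, u' (.inl l0) * w l0.1)
        + ∑ p : {l : L // 0 < c l}, ∑ q : {l : L // c l < 0},
            u' (.inr (p, q)) * (w p.1 / c p.1 - w q.1 / c q.1) := by
    intro w
    have hsplit1 : ∑ l, u l * w l
        = ∑ l ∈ Finset.univ.filter (fun l => c l = 0), u l * w l
          + (∑ l ∈ (Finset.univ.filter (fun l => ¬ c l = 0)).filter (fun l => 0 < c l), u l * w l
            + ∑ l ∈ (Finset.univ.filter (fun l => ¬ c l = 0)).filter (fun l => ¬ 0 < c l), u l * w l) := by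
      rw [Finset.sum_filter_add_sum_filter_not
        ((Finset.univ.filter (fun l => ¬ c l = 0))) (fun l => 0 < c l),
        Finset.sum_filter_add_sum_filter_not Finset.univ (fun l => c l = 0)]
    have e0 : ∑ l ∈ Finset.univ.filter (fun l => c l = 0), u l * w l
        = ∑ l0 : {l : L // c l = 0}, u' (.inl l0) * w l0.1 := by
      rw [Finset.sum_subtype (p := fun l => c l = 0) _ (by simp)]
      refine Finset.sum_congr rfl (fun l0 _ => ?_)
      have : u l0.1 = u' (.inl l0) := by
        simp only [hu, dif_pos l0.2, Subtype.coe_eta]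
      rw [this]
    have eP : ∑ l ∈ (Finset.univ.filter (fun l => ¬ c l = 0)).filter (fun l => 0 < c l), u l * w l
        = ∑ p : {l : L // 0 < c l}, ∑ q : {l : L // c l < 0},
            u' (.inr (p, q)) * (w p.1 / c p.1) := by
      rw [Finset.sum_subtype (p := fun l => 0 < c l) _ (by
        intro l
        simp only [Finset.mem_filter, Finset.mem_univ, true_and]
        exact ⟨fun h => h.2, fun h => ⟨ne_of_gt h, h⟩⟩)]
      refine Finset.sum_congr rfl (fun p _ => ?_)
      have h1 : u p.1 = (∑ q : {l : L // c l < 0}, u' (.inr (p, q))) / c p.1 := by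
        simp only [hu, dif_neg (ne_of_gt p.2), dif_pos p.2, Subtype.coe_eta]
      rw [h1, div_mul_eq_mul_div, Finset.sum_mul, Finset.sum_div]
      exact Finset.sum_congr rfl (fun q _ => (mul_div_assoc _ _ _))
    have eN : ∑ l ∈ (Finset.univ.filter (fun l => ¬ c l = 0)).filter (fun l => ¬ 0 < c l), u l * w l
        = ∑ q : {l : L // c l < 0}, ∑ p : {l : L // 0 < c l},
            u' (.inr (p, q)) * (- (w q.1 / c q.1)) := by
      rw [Finset.sum_subtype (p := fun l => c l < 0) _ (by
        intro l
        simp only [Finset.mem_filter, Finset.mem_univ, true_and]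
        constructor
        · rintro ⟨h1, h2⟩; exact lt_of_le_of_ne (le_of_not_gt h2) h1
        · intro h; exact ⟨ne_of_lt h, not_lt.mpr (le_of_lt h)⟩)]
      refine Finset.sum_congr rfl (fun q _ => ?_)
      have h1 : u q.1 = (∑ p : {l : L // 0 < c l}, u' (.inr (p, q))) / (- c q.1) := by
        simp only [hu, dif_neg (ne_of_lt q.2), dif_neg (not_lt.mpr (le_of_lt q.2)),
          Subtype.coe_eta]
      rw [h1, div_mul_eq_mul_div, Finset.sum_mul, Finset.sum_div]
      refine Finset.sum_congr rfl (fun p _ => ?_)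
      rw [mul_div_assoc, div_neg]
    rw [hsplit1, e0, eP, eN]
    have swap : ∑ q : {l : L // c l < 0}, ∑ p : {l : L // 0 < c l},
        u' (.inr (p, q)) * (- (w q.1 / c q.1))
        = - ∑ p : {l : L // 0 < c l}, ∑ q : {l : L // c l < 0},
            u' (.inr (p, q)) * (w q.1 / c q.1) := by
      rw [Finset.sum_comm, ← Finset.sum_neg_distrib]
      exact Finset.sum_congr rfl (fun p _ => by
        rw [← Finset.sum_neg_distrib]
        exact Finset.sum_congr rfl (fun q _ => by ring))
    rw [swap]
    have expand : ∑ p : {l : L // 0 < c l}, ∑ q : {l : L // c l < 0},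
        u' (.inr (p, q)) * (w p.1 / c p.1 - w q.1 / c q.1)
        = ∑ p : {l : L // 0 < c l}, ∑ q : {l : L // c l < 0},
            u' (.inr (p, q)) * (w p.1 / c p.1)
          - ∑ p : {l : L // 0 < c l}, ∑ q : {l : L // c l < 0},
            u' (.inr (p, q)) * (w q.1 / c q.1) := by
      rw [← Finset.sum_sub_distrib]
      exact Finset.sum_congr rfl (fun p _ => by
        rw [← Finset.sum_sub_distrib]
        exact Finset.sum_congr rfl (fun q _ => by ring))
    rw [expand]
    ring
  refine ⟨u, ?_, ?_, ?_⟩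
  · intro l
    simp only [hu]
    split_ifs with h0 hp
    · exact hu'0 _
    · exact div_nonneg (Finset.sum_nonneg (fun q _ => hu'0 _)) (le_of_lt hp)
    · exact div_nonneg (Finset.sum_nonneg (fun p _ => hu'0 _))
        (by linarith [lt_of_le_of_ne (le_of_not_gt hp) h0])
  · intro v
    match v with
    | none =>
      have : ∑ l, u l * M l none = ∑ l, u l * c l := rfl
      rw [this, hkey c]
      have h1 : ∑ l0 : {l : L // c l = 0}, u' (.inl l0) * c l0.1 = 0 :=
        Finset.sum_eq_zero (fun l0 _ => by rw [l0.2, mul_zero])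
      have h2 : ∑ p : {l : L // 0 < c l}, ∑ q : {l : L // c l < 0},
          u' (.inr (p, q)) * (c p.1 / c p.1 - c q.1 / c q.1) = 0 :=
        Finset.sum_eq_zero (fun p _ => Finset.sum_eq_zero (fun q _ => by
          rw [div_self (ne_of_gt p.2), div_self (ne_of_lt q.2)]; ring))
      rw [h1, h2, add_zero]
    | some a =>
      have : ∑ l, u l * M l (some a) = ∑ l, u l * S l a := rfl
      rw [this, hkey (fun l => S l a)]
      have := hu'M a
      rw [Fintype.sum_sum_type, Fintype.sum_prod_type] at this
      simpa [hM'] using this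
  · rw [hkey b]
    have := hu'b
    rw [Fintype.sum_sum_type, Fintype.sum_prod_type] at this
    simpa [hb'] using this

theorem farkas {V : Type u} [fv : Fintype V] {L : Type v} [Fintype L]
    (M : L → V → ℝ) (b : L → ℝ)
    (hinf : ¬ ∃ x : V → ℝ, ∀ l, ∑ v, M l v * x v ≤ b l) :
    ∃ u : L → ℝ, (∀ l, 0 ≤ u l) ∧ (∀ v, ∑ l, u l * M l v = 0) ∧ ∑ l, u l * b l < 0 := by
  have H : FarkasP.{u, v} V := by
    refine Finite.induction_empty_option (P := FarkasP.{u, v}) ?_ ?_ ?_ V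
    · exact fun e h => farkasP_equiv e h
    · exact farkasP_pempty
    · exact fun h => farkasP_option h
  exact H fv M b hinf

end Farkas


lemma decay_aux {f : ℝ → ℝ} {a b L ε : ℝ} (hab : a < b) (hL : 0 ≤ L)
    (hε : 0 < ε) (hε1 : ε < 1)
    (hlip : ∀ s t, a ≤ s → s ≤ t → t ≤ b → |f t - f s| ≤ L * (t - s))
    (N : Set ℝ) (hN : MeasureTheory.volume N = 0)
    (hderiv : ∀ t ∈ Set.Ioo a b, t ∉ N → ∃ d, d ≤ 0 ∧ HasDerivAt f d t) :
    f b ≤ f a + ε * (3 * (L + 1) + (b - a)) := by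
  classical
  obtain ⟨U0, hNU0, hU0open, hU0vol⟩ :=
    Set.exists_isOpen_lt_of_lt N (ENNReal.ofReal ε)
      (by rw [hN]; exact ENNReal.ofReal_pos.mpr hε)
  set U : Set ℝ := U0 ∪ Set.Ioo (a - ε) (a + ε) with hU
  have hUopen : IsOpen U := hU0open.union isOpen_Ioo
  have hUvol : MeasureTheory.volume U ≤ ENNReal.ofReal ε + ENNReal.ofReal (2 * ε) := by
    refine le_trans (MeasureTheory.measure_union_le _ _) ?_
    refine add_le_add (le_of_lt hU0vol) ?_
    rw [Real.volume_Ioo]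
    exact ENNReal.ofReal_le_ofReal (by linarith)
  have hUfin : MeasureTheory.volume U ≠ ⊤ := by
    refine ne_top_of_le_ne_top ?_ hUvol
    exact ENNReal.add_ne_top.mpr ⟨ENNReal.ofReal_ne_top, ENNReal.ofReal_ne_top⟩
  set m : ℝ → ℝ := fun t => (MeasureTheory.volume (U ∩ Set.Ioc a t)).toReal with hm
  have hfin : ∀ t, MeasureTheory.volume (U ∩ Set.Ioc a t) ≠ ⊤ :=
    fun t => ne_top_of_le_ne_top hUfin (MeasureTheory.measure_mono Set.inter_subset_left)
  have hm_add : ∀ s t, a ≤ s → s ≤ t →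
      m t = m s + (MeasureTheory.volume (U ∩ Set.Ioc s t)).toReal := by
    intro s t has hst
    have hsplit : Set.Ioc a t = Set.Ioc a s ∪ Set.Ioc s t :=
      (Set.Ioc_union_Ioc_eq_Ioc has hst).symm
    have hdisj : Disjoint (U ∩ Set.Ioc a s) (U ∩ Set.Ioc s t) :=
      (Set.Ioc_disjoint_Ioc_of_le le_rfl).mono Set.inter_subset_right Set.inter_subset_right
    rw [hm]
    simp only
    rw [hsplit, Set.inter_union_distrib_left,
      MeasureTheory.measure_union hdisj
        (hUopen.measurableSet.inter measurableSet_Ioc),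
      ENNReal.toReal_add (hfin s) (ne_top_of_le_ne_top hUfin
        (MeasureTheory.measure_mono Set.inter_subset_left))]
  have hm_incr_le : ∀ s t, s ≤ t →
      (MeasureTheory.volume (U ∩ Set.Ioc s t)).toReal ≤ t - s := by
    intro s t hst
    have h1 : MeasureTheory.volume (U ∩ Set.Ioc s t) ≤ ENNReal.ofReal (t - s) := by
      refine le_trans (MeasureTheory.measure_mono Set.inter_subset_right) ?_
      rw [Real.volume_Ioc]
    calc (MeasureTheory.volume (U ∩ Set.Ioc s t)).toReal
        ≤ (ENNReal.ofReal (t - s)).toReal :=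
          ENNReal.toReal_mono ENNReal.ofReal_ne_top h1
      _ = t - s := ENNReal.toReal_ofReal (by linarith)
  have hm_le : ∀ s t, a ≤ s → s ≤ t → m t - m s ≤ t - s := by
    intro s t has hst
    rw [hm_add s t has hst]
    have := hm_incr_le s t hst
    linarith
  have hm_mono : ∀ s t, a ≤ s → s ≤ t → m s ≤ m t := by
    intro s t has hst
    rw [hm_add s t has hst]
    have : 0 ≤ (MeasureTheory.volume (U ∩ Set.Ioc s t)).toReal := ENNReal.toReal_nonneg
    linarith
  have hm_full : ∀ s t, a ≤ s → s ≤ t → Set.Ioc s t ⊆ U → m t - m s = t - s := by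
    intro s t has hst hsub
    rw [hm_add s t has hst, Set.inter_eq_self_of_subset_right hsub, Real.volume_Ioc,
      ENNReal.toReal_ofReal (by linarith)]
    ring
  have hma : m a = 0 := by
    rw [hm]; simp
  -- continuity
  have hf_cont : ContinuousOn f (Set.Icc a b) := by
    refine LipschitzOnWith.continuousOn (K := Real.toNNReal L) ?_
    refine LipschitzOnWith.of_dist_le_mul ?_
    intro x hx y hy
    rw [Real.dist_eq, Real.dist_eq, Real.coe_toNNReal L hL]
    rcases le_total y x with h | h
    · have h2 := hlip y x hy.1 h hx.2
      rw [abs_of_nonneg (by linarith : (0:ℝ) ≤ x - y)]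
      exact h2
    · have h2 := hlip x y hx.1 h hy.2
      rw [abs_of_nonpos (by linarith : x - y ≤ 0), abs_sub_comm]
      calc |f y - f x| ≤ L * (y - x) := h2
        _ = L * -(x - y) := by ring
  have hm_cont : ContinuousOn m (Set.Icc a b) := by
    refine LipschitzOnWith.continuousOn (K := 1) ?_
    refine LipschitzOnWith.of_dist_le_mul ?_
    intro x hx y hy
    rw [Real.dist_eq, Real.dist_eq, NNReal.coe_one, one_mul]
    rcases le_total y x with h | h
    · rw [abs_of_nonneg (by linarith [hm_mono y x hy.1 h] : (0:ℝ) ≤ m x - m y),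
        abs_of_nonneg (by linarith : (0:ℝ) ≤ x - y)]
      linarith [hm_le y x hy.1 h]
    · rw [abs_of_nonpos (by linarith [hm_mono x y hx.1 h] : m x - m y ≤ 0),
        abs_of_nonpos (by linarith : x - y ≤ 0)]
      linarith [hm_le x y hx.1 h]
  set S : Set ℝ := {t ∈ Set.Icc a b | f t - f a ≤ (L + ε) * m t + ε * (t - a)} with hSdef
  have hSa : a ∈ S := by
    refine ⟨Set.left_mem_Icc.mpr (le_of_lt hab), ?_⟩
    rw [hma]
    simp
  have hS_closed : IsClosed S := by
    have : S = Set.Icc a b ∩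
        (fun t => f t - f a - ((L + ε) * m t + ε * (t - a))) ⁻¹' Set.Iic 0 := by
      ext t
      simp only [hSdef, Set.mem_setOf_eq, Set.mem_inter_iff, Set.mem_preimage, Set.mem_Iic]
      constructor
      · rintro ⟨h1, h2⟩; exact ⟨h1, by linarith⟩
      · rintro ⟨h1, h2⟩; exact ⟨h1, by linarith⟩
    rw [this]
    refine ContinuousOn.preimage_isClosed_of_isClosed ?_ isClosed_Icc isClosed_Iic
    exact (hf_cont.sub continuousOn_const).sub
      ((continuousOn_const.mul hm_cont).add (continuousOn_const.mul
        ((continuousOn_id.sub continuousOn_const))))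
  have hbdd : BddAbove S := ⟨b, fun t ht => ht.1.2⟩
  set c : ℝ := sSup S with hcdef
  have hcS : c ∈ S := hS_closed.csSup_mem ⟨a, hSa⟩ hbdd
  have hac : a ≤ c := hcS.1.1
  have hcb : c ≤ b := hcS.1.2
  have hcb' : c = b := by
    by_contra hne
    have hclt : c < b := lt_of_le_of_ne hcb hne
    have hgood : ∀ z, c < z → z ≤ b → z ∈ S → False := by
      intro z h1 h2 h3
      exact absurd (le_csSup hbdd h3) (not_le.mpr h1)
    by_cases hcU : c ∈ U
    · obtain ⟨δ, hδ, hball⟩ := Metric.isOpen_iff.mp hUopen c hcU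
      set t' : ℝ := min (c + δ / 2) b with ht'
      have hct' : c < t' := lt_min (by linarith) hclt
      have ht'b : t' ≤ b := min_le_right _ _
      have hsub : Set.Ioc c t' ⊆ U := by
        intro z hz
        refine hball ?_
        rw [Metric.mem_ball, Real.dist_eq, abs_of_pos (by linarith [hz.1])]
        have : z ≤ c + δ / 2 := le_trans hz.2 (min_le_left _ _)
        linarith [hz.1]
      have hmfull := hm_full c t' hac (le_of_lt hct') hsub
      have hflip := hlip c t' hac (le_of_lt hct') ht'b
      have habs := (abs_le.mp hflip).2
      refine hgood t' hct' ht'b ⟨⟨le_trans hac (le_of_lt hct'), ht'b⟩, ?_⟩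
      have hc2 := hcS.2
      nlinarith [hε.le]
    · have hcN : c ∉ N := fun h => hcU (Or.inl (hNU0 h))
      have hca : a < c := by
        rcases lt_or_eq_of_le hac with h | h
        · exact h
        · exfalso
          exact hcU (Or.inr ⟨by linarith [hε], by linarith [hε]⟩)
      obtain ⟨d, hd0, hder⟩ := hderiv c ⟨hca, hclt⟩ hcN
      have htd : Filter.Tendsto (slope f c) (nhdsWithin c (Set.Ioi c)) (nhds d) :=
        (hasDerivAt_iff_tendsto_slope.mp hder).mono_left
          (nhdsWithin_mono _ (fun z hz => Set.mem_compl_singleton_iff.mpr (ne_of_gt hz)))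
      have hev1 : ∀ᶠ z in nhdsWithin c (Set.Ioi c), slope f c z < ε :=
        htd.eventually_lt_const (by linarith)
      have hev2 : ∀ᶠ z in nhdsWithin c (Set.Ioi c), z ∈ Set.Ioo c b :=
        Filter.eventually_of_mem (Ioo_mem_nhdsGT_of_mem ⟨le_refl c, hclt⟩) (fun z hz => hz)
      obtain ⟨z, hz1, hz2⟩ := (hev1.and hev2).exists
      have hslope : (f z - f c) / (z - c) < ε := by
        rw [slope_def_field] at hz1
        exact hz1
      have hzc : 0 < z - c := by linarith [hz2.1]
      have hfz : f z - f c ≤ ε * (z - c) := by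
        rw [div_lt_iff₀ hzc] at hslope
        linarith
      refine hgood z hz2.1 (le_of_lt hz2.2) ⟨⟨by linarith [hz2.1], le_of_lt hz2.2⟩, ?_⟩
      have hc2 := hcS.2
      have hmm := hm_mono c z hac (le_of_lt hz2.1)
      nlinarith [hε.le, hL]
  -- conclude
  have hfb := hcS.2
  rw [hcb'] at hfb
  have hmb : m b ≤ 3 * ε := by
    have h1 : MeasureTheory.volume (U ∩ Set.Ioc a b) ≤
        ENNReal.ofReal ε + ENNReal.ofReal (2 * ε) :=
      le_trans (MeasureTheory.measure_mono Set.inter_subset_left) hUvol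
    calc m b ≤ (ENNReal.ofReal ε + ENNReal.ofReal (2 * ε)).toReal :=
          ENNReal.toReal_mono (ENNReal.add_ne_top.mpr
            ⟨ENNReal.ofReal_ne_top, ENNReal.ofReal_ne_top⟩) h1
      _ = ε + 2 * ε := by
          rw [ENNReal.toReal_add ENNReal.ofReal_ne_top ENNReal.ofReal_ne_top,
            ENNReal.toReal_ofReal hε.le, ENNReal.toReal_ofReal (by linarith)]
      _ = 3 * ε := by ring
  have hmb0 : 0 ≤ m b := ENNReal.toReal_nonneg
  nlinarith [hε.le]

lemma decay {f : ℝ → ℝ} {a b L : ℝ} (hab : a ≤ b) (hL : 0 ≤ L)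
    (hlip : ∀ s t, a ≤ s → s ≤ t → t ≤ b → |f t - f s| ≤ L * (t - s))
    (N : Set ℝ) (hN : MeasureTheory.volume N = 0)
    (hderiv : ∀ t ∈ Set.Ioo a b, t ∉ N → ∃ d, d ≤ 0 ∧ HasDerivAt f d t) :
    f b ≤ f a := by
  rcases eq_or_lt_of_le hab with rfl | hab'
  · exact le_refl _
  have hCpos : 0 < 3 * (L + 1) + (b - a) := by nlinarith
  have key : ∀ ε : ℝ, 0 < ε → ε < 1 → f b ≤ f a + ε * (3 * (L + 1) + (b - a)) :=
    fun ε h1 h2 => decay_aux hab' hL h1 h2 hlip N hN hderiv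
  by_contra hgt
  push_neg at hgt
  obtain ⟨ε, hε0, hε1, hεC⟩ : ∃ ε : ℝ, 0 < ε ∧ ε < 1 ∧
      ε * (3 * (L + 1) + (b - a)) ≤ (f b - f a) / 2 := by
    refine ⟨min (1 / 2) ((f b - f a) / (2 * (3 * (L + 1) + (b - a)))),
      lt_min (by norm_num) (div_pos (by linarith) (by linarith)),
      lt_of_le_of_lt (min_le_left _ _) (by norm_num), ?_⟩
    calc min (1 / 2) ((f b - f a) / (2 * (3 * (L + 1) + (b - a)))) * (3 * (L + 1) + (b - a))
        ≤ ((f b - f a) / (2 * (3 * (L + 1) + (b - a)))) * (3 * (L + 1) + (b - a)) :=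
          mul_le_mul_of_nonneg_right (min_le_right _ _) hCpos.le
      _ = (f b - f a) / 2 := by
          field_simp
  have h9 := key ε hε0 hε1
  nlinarith


lemma sum_swap_helper {X J : Type*} [Fintype X] [Fintype J] (xstar : J → ℝ)
    (c : X → ℝ) (B : X → J → ℝ) :
    ∑ j, xstar j * ∑ x, c x * B x j = ∑ x, c x * ∑ j, B x j * xstar j := by
  calc ∑ j, xstar j * ∑ x, c x * B x j
      = ∑ j, ∑ x, c x * (B x j * xstar j) := by
        refine Finset.sum_congr rfl fun j _ => ?_
        rw [Finset.mul_sum]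
        exact Finset.sum_congr rfl fun x _ => by ring
    _ = ∑ x, ∑ j, c x * (B x j * xstar j) := Finset.sum_comm
    _ = ∑ x, c x * ∑ j, B x j * xstar j :=
        Finset.sum_congr rfl fun x _ => (Finset.mul_sum _ _ _).symm

lemma deriv_nonneg_of_right_mono {f : ℝ → ℝ} {d t : ℝ} (hf : HasDerivAt f d t)
    (hm : ∀ z, t < z → z < t + 1 → f t ≤ f z) : 0 ≤ d := by
  have htd : Filter.Tendsto (slope f t) (nhdsWithin t (Set.Ioi t)) (nhds d) :=
    (hasDerivAt_iff_tendsto_slope.mp hf).mono_left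
      (nhdsWithin_mono _ (fun z hz => Set.mem_compl_singleton_iff.mpr (ne_of_gt hz)))
  refine ge_of_tendsto htd ?_
  filter_upwards [Ioo_mem_nhdsGT_of_mem (Set.mem_Ico.mpr ⟨le_refl t, lt_add_one t⟩)] with z hz
  rw [slope_def_field]
  have h1 : 0 < z - t := by linarith [hz.1]
  have h2 := hm z hz.1 hz.2
  exact div_nonneg (by linarith) h1.le

lemma yRa_nonpos {I J K : Type*} [Fintype I] [Fintype J] [Fintype K] [DecidableEq J] [DecidableEq K]
    (R : I → J → ℝ) (A : K → J → ℝ) (JI : Finset J) (KI : Finset K)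
    (hND : NetData A JI KI) (y : I → ℝ) (z : K → ℝ)
    (hfeas : Dfeas R A JI KI y z) (hz : ∀ k, 0 ≤ z k) (hv : (1:ℝ) ≤ ∑ k ∈ KI, z k)
    (a : J → ℝ) (ha : a ∈ Alloc A KI) :
    ∑ i, y i * ∑ j, R i j * a j ≤ 0 := by
  obtain ⟨ha0, ha1, haKI⟩ := ha
  have hA0 : ∀ k j, 0 ≤ A k j := fun k j => by
    rcases hND.1 k j with h | h <;> rw [h] <;> norm_num
  have swap2 : ∀ (S : Finset J) (Kf : Finset K),
      ∑ j ∈ S, a j * ∑ k ∈ Kf, z k * A k j = ∑ k ∈ Kf, z k * ∑ j ∈ S, A k j * a j := by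
    intro S Kf
    calc ∑ j ∈ S, a j * ∑ k ∈ Kf, z k * A k j
        = ∑ j ∈ S, ∑ k ∈ Kf, z k * (A k j * a j) := by
          refine Finset.sum_congr rfl fun j _ => ?_
          rw [Finset.mul_sum]
          exact Finset.sum_congr rfl fun k _ => by ring
      _ = ∑ k ∈ Kf, ∑ j ∈ S, z k * (A k j * a j) := Finset.sum_comm
      _ = ∑ k ∈ Kf, z k * ∑ j ∈ S, A k j * a j :=
          Finset.sum_congr rfl fun k _ => (Finset.mul_sum _ _ _).symm
  have step1 : ∑ i, y i * ∑ j, R i j * a j = ∑ j, a j * ∑ i, y i * R i j :=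
    (sum_swap_helper a y R).symm
  rw [step1, ← Finset.sum_add_sum_compl JI (fun j => a j * ∑ i, y i * R i j)]
  have b1 : ∑ j ∈ JI, a j * ∑ i, y i * R i j
      ≤ ∑ j ∈ JI, a j * (- ∑ k ∈ KI, z k * A k j) :=
    Finset.sum_le_sum fun j hj => mul_le_mul_of_nonneg_left (hfeas.1 j hj) (ha0 j)
  have b2 : ∑ j ∈ JIᶜ, a j * ∑ i, y i * R i j
      ≤ ∑ j ∈ JIᶜ, a j * ∑ k ∈ KIᶜ, z k * A k j :=
    Finset.sum_le_sum fun j hj =>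
      mul_le_mul_of_nonneg_left (hfeas.2.1 j (Finset.mem_compl.mp hj)) (ha0 j)
  have c1 : ∑ j ∈ JI, a j * (- ∑ k ∈ KI, z k * A k j) = - ∑ k ∈ KI, z k := by
    calc ∑ j ∈ JI, a j * (- ∑ k ∈ KI, z k * A k j)
        = - ∑ j ∈ JI, a j * ∑ k ∈ KI, z k * A k j := by
          rw [← Finset.sum_neg_distrib]
          exact Finset.sum_congr rfl fun j _ => by ring
      _ = - ∑ k ∈ KI, z k * ∑ j ∈ JI, A k j * a j := by rw [swap2]
      _ = - ∑ k ∈ KI, z k := by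
          congr 1
          refine Finset.sum_congr rfl fun k hk => ?_
          have hfull : ∑ j ∈ JI, A k j * a j = ∑ j, A k j * a j := by
            refine Finset.sum_subset (Finset.subset_univ JI) fun j _ hj => ?_
            rw [hND.2.1 k j (Or.inl ⟨hk, hj⟩), zero_mul]
          rw [hfull, haKI k hk, mul_one]
  have c2 : ∑ j ∈ JIᶜ, a j * ∑ k ∈ KIᶜ, z k * A k j ≤ 1 := by
    rw [swap2]
    calc ∑ k ∈ KIᶜ, z k * ∑ j ∈ JIᶜ, A k j * a j
        ≤ ∑ k ∈ KIᶜ, z k * 1 := by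
          refine Finset.sum_le_sum fun k hk => ?_
          refine mul_le_mul_of_nonneg_left ?_ (hz k)
          refine le_trans ?_ (ha1 k)
          refine Finset.sum_le_sum_of_subset_of_nonneg (Finset.subset_univ JIᶜ)
            fun j _ _ => mul_nonneg (hA0 k j) (ha0 j)
      _ = 1 := by
          simp only [mul_one]
          exact hfeas.2.2.1
  linarith

theorem dual_ge_one {I J K : Type*} [Fintype I] [Fintype J] [Fintype K] [DecidableEq J] [DecidableEq K]
    (R : I → J → ℝ) (A : K → J → ℝ) (JI : Finset J) (KI : Finset K)
    (hND : NetData A JI KI) (xstar : J → ℝ) (hSPP : SPPopt R A KI 1 xstar)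
    (ystar : I → ℝ) (zstar : K → ℝ) (hD : Dopt R A JI KI ystar zstar) :
    (1:ℝ) ≤ ∑ k ∈ KI, zstar k := by
  classical
  refine le_of_forall_pos_le_add ?_
  intro δ hδ
  -- set up the infeasible primal-improvement system
  set M : (((I ⊕ I) ⊕ ({k : K // k ∈ KI} ⊕ {k : K // k ∈ KI})) ⊕
      (({k : K // k ∉ KI} ⊕ J) ⊕ Unit)) → Option J → ℝ :=
    fun l => match l with
    | .inl (.inl (.inl i)) => fun v => Option.elim v 0 (fun j => R i j)
    | .inl (.inl (.inr i)) => fun v => Option.elim v 0 (fun j => - R i j)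
    | .inl (.inr (.inl k)) => fun v => Option.elim v 0 (fun j => A k.1 j)
    | .inl (.inr (.inr k)) => fun v => Option.elim v 0 (fun j => - A k.1 j)
    | .inr (.inl (.inl k)) => fun v => Option.elim v (-1) (fun j => A k.1 j)
    | .inr (.inl (.inr j0)) => fun v => Option.elim v 0 (fun j => if j = j0 then -1 else 0)
    | .inr (.inr _) => fun v => Option.elim v 1 (fun _ => 0) with hM
  set bb : (((I ⊕ I) ⊕ ({k : K // k ∈ KI} ⊕ {k : K // k ∈ KI})) ⊕
      (({k : K // k ∉ KI} ⊕ J) ⊕ Unit)) → ℝ :=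
    fun l => match l with
    | .inl (.inl _) => 0
    | .inl (.inr (.inl _)) => 1
    | .inl (.inr (.inr _)) => -1
    | .inr (.inl _) => 0
    | .inr (.inr _) => 1 - δ with hbb
  have hinf : ¬ ∃ x : Option J → ℝ, ∀ l, ∑ v, M l v * x v ≤ bb l := by
    rintro ⟨x, hx⟩
    have hfeas : SPPfeas R A KI (x none) (fun j => x (some j)) := by
      refine ⟨?_, ?_, ?_, ?_⟩
      · intro i
        have h1 := hx (.inl (.inl (.inl i)))
        have h2 := hx (.inl (.inl (.inr i)))
        rw [Fintype.sum_option] at h1 h2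
        simp only [hM, hbb, Option.elim, zero_mul, zero_add, neg_mul] at h1 h2
        rw [Finset.sum_neg_distrib] at h2
        have : ∑ j, R i j * x (some j) = 0 := le_antisymm h1 (by linarith)
        exact this
      · intro k hk
        have h1 := hx (.inl (.inr (.inl ⟨k, hk⟩)))
        have h2 := hx (.inl (.inr (.inr ⟨k, hk⟩)))
        rw [Fintype.sum_option] at h1 h2
        simp only [hM, hbb, Option.elim, zero_mul, zero_add, neg_mul] at h1 h2
        rw [Finset.sum_neg_distrib] at h2
        exact le_antisymm h1 (by linarith)
      · intro k hk
        have h1 := hx (.inr (.inl (.inl ⟨k, hk⟩)))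
        rw [Fintype.sum_option] at h1
        simp only [hM, hbb, Option.elim, neg_mul, one_mul, neg_one_mul] at h1
        linarith
      · intro j0
        have h1 := hx (.inr (.inl (.inr j0)))
        rw [Fintype.sum_option] at h1
        simp only [hM, hbb, Option.elim, zero_mul, zero_add, ite_mul, neg_one_mul] at h1
        rw [Finset.sum_ite_eq' Finset.univ j0 (fun j => - x (some j))] at h1
        simp at h1
        exact h1
    have hρ : x none ≤ 1 - δ := by
      have h1 := hx (.inr (.inr Unit.unit))
      rw [Fintype.sum_option] at h1
      simp only [hM, hbb, Option.elim, one_mul, zero_mul, Finset.sum_const_zero] at h1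
      linarith
    have := hSPP.2 (x none) (fun j => x (some j)) hfeas
    linarith
  obtain ⟨u, hu0, huM, hub⟩ := farkas M bb hinf
  have hnone := huM none
  simp only [Fintype.sum_sum_type] at hnone
  simp only [hM, Option.elim, mul_zero, mul_one, mul_neg_one, Finset.sum_const_zero,
    zero_add, add_zero, Fintype.sum_unique] at hnone
  have hsome : ∀ j : J,
      ∑ x : I, u (.inl (.inl (.inl x))) * R x j
        - ∑ x : I, u (.inl (.inl (.inr x))) * R x j
        + (∑ x : {k : K // k ∈ KI}, u (.inl (.inr (.inl x))) * A x.1 j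
          - ∑ x : {k : K // k ∈ KI}, u (.inl (.inr (.inr x))) * A x.1 j)
        + ∑ x : {k : K // k ∉ KI}, u (.inr (.inl (.inl x))) * A x.1 j
        = u (.inr (.inl (.inr j))) := by
    intro j
    have h := huM (some j)
    simp only [Fintype.sum_sum_type] at h
    simp only [hM, Option.elim, mul_zero, mul_one, mul_neg_one, Finset.sum_const_zero,
      zero_add, add_zero, Fintype.sum_unique, mul_ite, mul_neg, Finset.sum_ite_eq,
      Finset.mem_univ, if_true] at h
    rw [Finset.sum_neg_distrib, Finset.sum_neg_distrib] at h
    linarith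
  have hb2 := hub
  simp only [Fintype.sum_sum_type] at hb2
  simp only [hbb, Option.elim, mul_zero, mul_one, mul_neg_one, Finset.sum_const_zero,
    zero_add, add_zero, Fintype.sum_unique, mul_ite, mul_neg] at hb2
  rw [Finset.sum_neg_distrib] at hb2
  -- hb2 : ∑ p1 - ∑ p2 + s * (1 - δ) < 0
  have hs_eq : u (.inr (.inr default)) = ∑ x : {k : K // k ∉ KI}, u (.inr (.inl (.inl x))) := by
    rw [Finset.sum_neg_distrib] at hnone
    linarith
  have hs_nonneg : 0 ≤ u (.inr (.inr default)) := hu0 _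
  rcases eq_or_lt_of_le hs_nonneg with hs0 | hs_pos
  · -- s = 0 : contradiction with primal feasibility of xstar
    exfalso
    have hq0 : ∀ x : {k : K // k ∉ KI}, u (.inr (.inl (.inl x))) = 0 := by
      have hsum0 : ∑ x : {k : K // k ∉ KI}, u (.inr (.inl (.inl x))) = 0 := by
        rw [← hs_eq, ← hs0]
      intro x
      exact (Finset.sum_eq_zero_iff_of_nonneg (fun x _ => hu0 _)).mp hsum0 x (Finset.mem_univ x)
    have hT : 0 ≤ ∑ j, xstar j * u (.inr (.inl (.inr j))) :=
      Finset.sum_nonneg fun j _ => mul_nonneg (hSPP.1.2.2.2 j) (hu0 _)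
    have hTval : ∑ j, xstar j * u (.inr (.inl (.inr j)))
        = ∑ x : {k : K // k ∈ KI}, u (.inl (.inr (.inl x)))
          - ∑ x : {k : K // k ∈ KI}, u (.inl (.inr (.inr x))) := by
      calc ∑ j, xstar j * u (.inr (.inl (.inr j)))
          = ∑ j, xstar j * (∑ x : I, u (.inl (.inl (.inl x))) * R x j
            - ∑ x : I, u (.inl (.inl (.inr x))) * R x j
            + (∑ x : {k : K // k ∈ KI}, u (.inl (.inr (.inl x))) * A x.1 j
              - ∑ x : {k : K // k ∈ KI}, u (.inl (.inr (.inr x))) * A x.1 j)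
            + ∑ x : {k : K // k ∉ KI}, u (.inr (.inl (.inl x))) * A x.1 j) :=
            Finset.sum_congr rfl fun j _ => by rw [hsome j]
        _ = ∑ j, (xstar j * ∑ x : I, u (.inl (.inl (.inl x))) * R x j
            - xstar j * ∑ x : I, u (.inl (.inl (.inr x))) * R x j
            + (xstar j * ∑ x : {k : K // k ∈ KI}, u (.inl (.inr (.inl x))) * A x.1 j
              - xstar j * ∑ x : {k : K // k ∈ KI}, u (.inl (.inr (.inr x))) * A x.1 j)
            + xstar j * ∑ x : {k : K // k ∉ KI}, u (.inr (.inl (.inl x))) * A x.1 j) :=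
            Finset.sum_congr rfl fun j _ => by ring
        _ = ∑ x : {k : K // k ∈ KI}, u (.inl (.inr (.inl x)))
            - ∑ x : {k : K // k ∈ KI}, u (.inl (.inr (.inr x))) := by
            rw [Finset.sum_add_distrib, Finset.sum_add_distrib, Finset.sum_sub_distrib,
              Finset.sum_sub_distrib,
              sum_swap_helper xstar (fun x => u (.inl (.inl (.inl x)))) R,
              sum_swap_helper xstar (fun x => u (.inl (.inl (.inr x)))) R,
              sum_swap_helper xstar (fun x : {k : K // k ∈ KI} => u (.inl (.inr (.inl x))))
                (fun x j => A x.1 j),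
              sum_swap_helper xstar (fun x : {k : K // k ∈ KI} => u (.inl (.inr (.inr x))))
                (fun x j => A x.1 j),
              sum_swap_helper xstar (fun x : {k : K // k ∉ KI} => u (.inr (.inl (.inl x))))
                (fun x j => A x.1 j)]
            have hR0 : ∀ i : I, ∑ j, R i j * xstar j = 0 := hSPP.1.1
            have hA1 : ∀ x : {k : K // k ∈ KI}, ∑ j, A x.1 j * xstar j = 1 :=
              fun x => hSPP.1.2.1 x.1 x.2
            simp only [hR0, hA1, mul_zero, mul_one, Finset.sum_const_zero]
            simp only [hq0, Finset.sum_const_zero, zero_mul]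
            ring
    rw [hTval] at hT
    rw [hs0.symm] at hb2
    linarith
  · -- s > 0 : build a dual feasible point with objective > 1 - δ
    set ss : ℝ := u (.inr (.inr default)) with hss
    set y : I → ℝ := fun i =>
      (u (.inl (.inl (.inr i))) - u (.inl (.inl (.inl i)))) / ss with hy
    set z : K → ℝ := fun k =>
      if h : k ∈ KI then
        (u (.inl (.inr (.inr ⟨k, h⟩))) - u (.inl (.inr (.inl ⟨k, h⟩)))) / ss
      else u (.inr (.inl (.inl ⟨k, h⟩))) / ss with hz
    have hKIconv : ∀ g : K → ℝ, ∑ k ∈ KI, g k = ∑ x : {k : K // k ∈ KI}, g x.1 :=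
      fun g => Finset.sum_subtype KI (fun _ => Iff.rfl) g
    have hKSconv : ∀ g : K → ℝ, ∑ k ∈ KIᶜ, g k = ∑ x : {k : K // k ∉ KI}, g x.1 :=
      fun g => Finset.sum_subtype KIᶜ (fun _ => Finset.mem_compl) g
    have hyR : ∀ j, ∑ i, y i * R i j
        = (∑ x : I, u (.inl (.inl (.inr x))) * R x j
          - ∑ x : I, u (.inl (.inl (.inl x))) * R x j) / ss := by
      intro j
      calc ∑ i, y i * R i j
          = ∑ i, (u (.inl (.inl (.inr i))) * R i j - u (.inl (.inl (.inl i))) * R i j) / ss :=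
            Finset.sum_congr rfl fun i _ => by rw [hy]; ring
        _ = (∑ i, (u (.inl (.inl (.inr i))) * R i j - u (.inl (.inl (.inl i))) * R i j)) / ss :=
            by rw [Finset.sum_div]
        _ = _ := by rw [Finset.sum_sub_distrib]
    have hfeas : Dfeas R A JI KI y z := by
      refine ⟨?_, ?_, ?_, ?_⟩
      · intro j hj
        have hKS0 : ∑ x : {k : K // k ∉ KI}, u (.inr (.inl (.inl x))) * A x.1 j = 0 :=
          Finset.sum_eq_zero fun x _ => by
            rw [hND.2.1 x.1 j (Or.inr ⟨x.2, hj⟩), mul_zero]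
        have hrow := hsome j
        rw [hKS0, add_zero] at hrow
        have hrnn : 0 ≤ u (.inr (.inl (.inr j))) := hu0 _
        have hzA : ∑ k ∈ KI, z k * A k j
            = (∑ x : {k : K // k ∈ KI}, u (.inl (.inr (.inr x))) * A x.1 j
              - ∑ x : {k : K // k ∈ KI}, u (.inl (.inr (.inl x))) * A x.1 j) / ss := by
          rw [hKIconv (fun k => z k * A k j)]
          calc ∑ x : {k : K // k ∈ KI}, z x.1 * A x.1 j
              = ∑ x : {k : K // k ∈ KI},
                  (u (.inl (.inr (.inr x))) * A x.1 j
                    - u (.inl (.inr (.inl x))) * A x.1 j) / ss := by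
                refine Finset.sum_congr rfl fun x _ => ?_
                rw [hz]
                simp only [dif_pos x.2, Subtype.coe_eta]
                ring
            _ = (∑ x : {k : K // k ∈ KI},
                  (u (.inl (.inr (.inr x))) * A x.1 j
                    - u (.inl (.inr (.inl x))) * A x.1 j)) / ss := by rw [Finset.sum_div]
            _ = _ := by rw [Finset.sum_sub_distrib]
        rw [hyR j, hzA, ← neg_div, div_le_div_iff_of_pos_right hs_pos]
        linarith
      · intro j hj
        have hKI0 : ∀ x : {k : K // k ∈ KI}, A x.1 j = 0 :=
          fun x => hND.2.1 x.1 j (Or.inl ⟨x.2, hj⟩)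
        have hrow := hsome j
        simp only [hKI0, mul_zero, Finset.sum_const_zero, sub_zero, add_zero, zero_add,
          sub_self] at hrow
        have hrnn : 0 ≤ u (.inr (.inl (.inr j))) := hu0 _
        have hzA : ∑ k ∈ KIᶜ, z k * A k j
            = (∑ x : {k : K // k ∉ KI}, u (.inr (.inl (.inl x))) * A x.1 j) / ss := by
          rw [hKSconv (fun k => z k * A k j), Finset.sum_div]
          refine Finset.sum_congr rfl fun x _ => ?_
          rw [hz]
          simp only [dif_neg x.2, Subtype.coe_eta]
          ring
        rw [hyR j, hzA, div_le_div_iff_of_pos_right hs_pos]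
        linarith
      · rw [hKSconv z]
        have : ∀ x : {k : K // k ∉ KI}, z x.1 = u (.inr (.inl (.inl x))) / ss := by
          intro x
          rw [hz]
          simp only [dif_neg x.2, Subtype.coe_eta]
        rw [Finset.sum_congr rfl (fun x _ => this x), ← Finset.sum_div, ← hs_eq]
        exact div_self (ne_of_gt hs_pos)
      · intro k hk
        rw [hz]
        simp only [dif_neg hk]
        exact div_nonneg (hu0 _) hs_pos.le
    have hobj : 1 - δ < ∑ k ∈ KI, z k := by
      have hzsum : ∑ k ∈ KI, z k
          = (∑ x : {k : K // k ∈ KI}, u (.inl (.inr (.inr x)))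
            - ∑ x : {k : K // k ∈ KI}, u (.inl (.inr (.inl x)))) / ss := by
        rw [hKIconv z]
        calc ∑ x : {k : K // k ∈ KI}, z x.1
            = ∑ x : {k : K // k ∈ KI},
                (u (.inl (.inr (.inr x))) - u (.inl (.inr (.inl x)))) / ss := by
              refine Finset.sum_congr rfl fun x _ => ?_
              rw [hz]
              simp only [dif_pos x.2, Subtype.coe_eta]
          _ = (∑ x : {k : K // k ∈ KI},
                (u (.inl (.inr (.inr x))) - u (.inl (.inr (.inl x))))) / ss := by
              rw [Finset.sum_div]
          _ = _ := by rw [Finset.sum_sub_distrib]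
      rw [hzsum, lt_div_iff₀ hs_pos]
      nlinarith
    have := hD.2 y z hfeas
    linarith

set_option maxHeartbeats 2000000

/-- Theorem 6, second part: if the fluid model solution exhibits the state
space collapse at some time `τ₁ ≥ 0`, then it does so at all later times. -/
theorem fluid_state_space_collapse_propagates {I J K : Type*} [Fintype I] [Fintype J] [Fintype K] [DecidableEq J] [DecidableEq K]
    (R : I → J → ℝ) (A : K → J → ℝ) (JI : Finset J) (KI : Finset K)
    (hND : NetData A JI KI)
    (α : I → ℝ) (hα : ∀ i, 0 < α i)
    (xstar : J → ℝ) (hSPP : SPPuniqueOpt R A KI 1 xstar)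
    (ystar : I → ℝ) (zstar : K → ℝ) (hD : DuniqueOpt R A JI KI ystar zstar)
    (hynn : ∀ i, 0 ≤ ystar i) (hznn : ∀ k, 0 ≤ zstar k)
    (Z : ℝ → I → ℝ) (T : ℝ → J → ℝ) (hfluid : FluidSol R A KI α Z T)
    (τ₁ : ℝ) (hτ₁ : 0 ≤ τ₁)
    (hcollapse : ∀ i, Z τ₁ i = zeta α ystar i * ∑ i', ystar i' * Z τ₁ i') :
    ∀ t, τ₁ ≤ t → ∀ i, Z t i = zeta α ystar i * ∑ i', ystar i' * Z t i' := by
  classical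
  obtain ⟨hZeq, hZnn, hTIeq, hTle, hTmono, hT0, hMP⟩ := hfluid
  have hND1 := hND.1
  have hND2 := hND.2.1
  have hND3 := hND.2.2
  -- abbreviations
  set ζ : I → ℝ := zeta α ystar with hζdef
  set W : ℝ → ℝ := fun s => ∑ i', ystar i' * Z s i' with hWdef
  set g : ℝ → ℝ := fun s => ∑ i', α i' * (Z s i' - ζ i' * W s) ^ 2 with hgdef
  -- strong duality and consequences
  have hv : (1:ℝ) ≤ ∑ k ∈ KI, zstar k :=
    dual_ge_one R A JI KI hND xstar hSPP.1 ystar zstar hD.1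
  have hyRa : ∀ a ∈ Alloc A KI, ∑ i', ystar i' * ∑ j, R i' j * a j ≤ 0 :=
    fun a ha => yRa_nonpos R A JI KI hND ystar zstar hD.1.1 hznn hv a ha
  -- ystar ≠ 0 and κ > 0
  have hyne : ∃ i0, ystar i0 ≠ 0 := by
    by_contra hy0
    push_neg at hy0
    have hzKI : ∀ k ∈ KI, zstar k = 0 := by
      intro k hk
      have hone := hSPP.1.1.2.1 k hk
      have hex : ∃ j, A k j * xstar j ≠ 0 := by
        by_contra hno
        push_neg at hno
        rw [Finset.sum_eq_zero (fun j _ => hno j)] at hone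
        norm_num at hone
      obtain ⟨j, hj⟩ := hex
      have hAkj : A k j = 1 := by
        rcases hND1 k j with h | h
        · exact absurd (by rw [h, zero_mul]) hj
        · exact h
      have hjJI : j ∈ JI := by
        by_contra hjn
        exact hj (by rw [hND2 k j (Or.inl ⟨hk, hjn⟩), zero_mul])
      have hdual := hD.1.1.1 j hjJI
      rw [Finset.sum_eq_zero (fun i' (_ : i' ∈ Finset.univ) => by
        rw [hy0 i', zero_mul])] at hdual
      have hterms : ∀ k' ∈ KI, 0 ≤ zstar k' * A k' j := fun k' _ =>
        mul_nonneg (hznn k') (by rcases hND1 k' j with h | h <;> rw [h] <;> norm_num)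
      have hsum0 : ∑ k' ∈ KI, zstar k' * A k' j = 0 :=
        le_antisymm (by linarith) (Finset.sum_nonneg hterms)
      have h5 := (Finset.sum_eq_zero_iff_of_nonneg hterms).mp hsum0 k hk
      rw [hAkj, mul_one] at h5
      exact h5
    rw [Finset.sum_eq_zero hzKI] at hv
    norm_num at hv
  have hκpos : 0 < ∑ i', (ystar i') ^ 2 / α i' := by
    obtain ⟨i0, hi0⟩ := hyne
    have h1 : 0 < ystar i0 ^ 2 / α i0 := div_pos (by positivity) (hα i0)
    refine lt_of_lt_of_le h1 ?_
    exact Finset.single_le_sum (f := fun i' => ystar i' ^ 2 / α i')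
      (fun i' _ => div_nonneg (sq_nonneg _) (hα i').le) (Finset.mem_univ i0)
  set κ : ℝ := ∑ i', (ystar i') ^ 2 / α i' with hκdef
  have hζval : ∀ i', ζ i' = (ystar i' / α i') / κ := by
    intro i'
    rw [hζdef]
    simp only [zeta]
    rfl
  have hζmul : ∀ i', α i' * ζ i' = ystar i' / κ := by
    intro i'
    rw [hζval i']
    field_simp [(hα i').ne', hκpos.ne']
  have hyζ : ∑ i', ystar i' * ζ i' = 1 := by
    have h1 : ∀ i', ystar i' * ζ i' = (ystar i' ^ 2 / α i') / κ := by
      intro i'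
      rw [hζval i']
      field_simp [(hα i').ne', hκpos.ne']
    rw [Finset.sum_congr rfl (fun i' _ => h1 i'), ← Finset.sum_div, ← hκdef,
      div_self hκpos.ne']
  -- xstar is an allocation
  have hxA : xstar ∈ Alloc A KI := by
    refine ⟨hSPP.1.1.2.2.2, fun k => ?_, hSPP.1.1.2.1⟩
    by_cases hk : k ∈ KI
    · exact le_of_eq (hSPP.1.1.2.1 k hk)
    · exact hSPP.1.1.2.2.1 k hk
  have hA0 : ∀ k j, 0 ≤ A k j := fun k j => by
    rcases hND1 k j with h | h <;> rw [h] <;> norm_num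
  have haj1 : ∀ a ∈ Alloc A KI, ∀ j, a j ≤ 1 := by
    intro a ha j
    obtain ⟨k, hk⟩ := hND3 j
    have h1 : A k j * a j ≤ ∑ j', A k j' * a j' :=
      Finset.single_le_sum (fun j' _ => mul_nonneg (hA0 k j') (ha.1 j')) (Finset.mem_univ j)
    rw [hk, one_mul] at h1
    exact le_trans h1 (ha.2.1 k)
  -- g vanishes at τ₁
  have hgτ : g τ₁ = 0 := by
    rw [hgdef]
    refine Finset.sum_eq_zero fun i' _ => ?_
    have hc := hcollapse i'
    rw [hWdef, hζdef]
    simp only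
    rw [← hc]
    ring
  -- Lipschitz estimates
  have hTdiff : ∀ (j : J) s1 s2, 0 ≤ s1 → s1 ≤ s2 →
      0 ≤ T s2 j - T s1 j ∧ T s2 j - T s1 j ≤ s2 - s1 := by
    intro j s1 s2 h1 h2
    constructor
    · have := hTmono s1 s2 h1 h2 j
      linarith
    · obtain ⟨k, hk⟩ := hND3 j
      have hsum := hTle s1 s2 h1 h2 k
      have hsingle : A k j * (T s2 j - T s1 j) ≤ ∑ j', A k j' * (T s2 j' - T s1 j') :=
        Finset.single_le_sum (f := fun j' => A k j' * (T s2 j' - T s1 j'))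
          (fun j' _ => mul_nonneg (hA0 k j')
          (by linarith [hTmono s1 s2 h1 h2 j'])) (Finset.mem_univ j)
      rw [hk, one_mul] at hsingle
      linarith
  have hZdiff : ∀ (i' : I) s1 s2, 0 ≤ s1 → s1 ≤ s2 →
      |Z s2 i' - Z s1 i'| ≤ (∑ j, |R i' j|) * (s2 - s1) := by
    intro i' s1 s2 h1 h2
    have e2 : ∑ j, R i' j * (T s2 j - T s1 j)
        = ∑ j, R i' j * T s2 j - ∑ j, R i' j * T s1 j := by
      rw [← Finset.sum_sub_distrib]
      exact Finset.sum_congr rfl fun j _ => by ring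
    have e1 : Z s2 i' - Z s1 i' = - ∑ j, R i' j * (T s2 j - T s1 j) := by
      rw [hZeq s2 (le_trans h1 h2) i', hZeq s1 h1 i', e2]
      ring
    rw [e1, abs_neg]
    refine le_trans (Finset.abs_sum_le_sum_abs _ _) ?_
    rw [Finset.sum_mul]
    refine Finset.sum_le_sum fun j _ => ?_
    rw [abs_mul]
    have hd := hTdiff j s1 s2 h1 h2
    rw [abs_of_nonneg hd.1]
    exact mul_le_mul_of_nonneg_left hd.2 (abs_nonneg _)
  have hWdiff : ∀ s1 s2, 0 ≤ s1 → s1 ≤ s2 →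
      |W s2 - W s1| ≤ (∑ i', |ystar i'| * ∑ j, |R i' j|) * (s2 - s1) := by
    intro s1 s2 h1 h2
    have e1 : W s2 - W s1 = ∑ i', ystar i' * (Z s2 i' - Z s1 i') := by
      rw [hWdef]
      simp only
      rw [← Finset.sum_sub_distrib]
      exact Finset.sum_congr rfl fun i' _ => by ring
    rw [e1]
    refine le_trans (Finset.abs_sum_le_sum_abs _ _) ?_
    rw [Finset.sum_mul]
    refine Finset.sum_le_sum fun i' _ => ?_
    rw [abs_mul, mul_assoc]
    exact mul_le_mul_of_nonneg_left (hZdiff i' s1 s2 h1 h2) (abs_nonneg _)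
  -- the main decay step
  have hgdecay : ∀ b, τ₁ ≤ b → g b = 0 := by
    intro b hblela
    rcases eq_or_lt_of_le hblela with rfl | hblt
    · exact hgτ
    have hb0 : 0 ≤ b := le_trans hτ₁ hblela
    -- null set of non-differentiability of the (stopped) allocation process
    have hNNnull : MeasureTheory.volume
        (⋃ j : J, {s : ℝ | ¬ DifferentiableAt ℝ (fun r => T (max r 0) j) s}) = 0 := by
      refine MeasureTheory.measure_iUnion_null fun j => ?_
      have hmono : Monotone (fun r => T (max r 0) j) := fun s1 s2 h =>
        hTmono (max s1 0) (max s2 0) (le_max_right _ _) (max_le_max h (le_refl 0)) j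
      have hae := hmono.ae_differentiableAt
      rw [MeasureTheory.ae_iff] at hae
      exact hae
    -- a.e. the derivative of g exists and is nonpositive
    have hder : ∀ t0 ∈ Set.Ioo τ₁ b,
        t0 ∉ (⋃ j : J, {s : ℝ | ¬ DifferentiableAt ℝ (fun r => T (max r 0) j) s}) →
        ∃ d, d ≤ 0 ∧ HasDerivAt g d t0 := by
      intro t0 ht0 ht0N
      have ht0pos : 0 < t0 := lt_of_le_of_lt hτ₁ ht0.1
      have hdiff : ∀ j, DifferentiableAt ℝ (fun r => T (max r 0) j) t0 := by
        intro j
        by_contra hc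
        exact ht0N (Set.mem_iUnion.mpr ⟨j, hc⟩)
      have hev : ∀ j : J, (fun s => T s j) =ᶠ[nhds t0] (fun r => T (max r 0) j) := by
        intro j
        filter_upwards [Ioi_mem_nhds ht0pos] with s hs
        rw [max_eq_left (le_of_lt hs)]
      set T'v : J → ℝ := fun j => deriv (fun r => T (max r 0) j) t0 with hT'vdef
      have hTd : ∀ j, HasDerivAt (fun s => T s j) (T'v j) t0 :=
        fun j => ((hdiff j).hasDerivAt).congr_of_eventuallyEq (hev j)
      have hT'nn : ∀ j, 0 ≤ T'v j := by
        intro j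
        refine deriv_nonneg_of_right_mono (hTd j) ?_
        intro z hz _
        exact hTmono t0 z ht0pos.le hz.le j
      have hAsum : ∀ k : K, HasDerivAt (fun s => ∑ j, A k j * T s j)
          (∑ j, A k j * T'v j) t0 :=
        fun k => HasDerivAt.fun_sum fun j _ => (hTd j).const_mul (A k j)
      have hdiffsum : ∀ (k : K) (s1 s2 : ℝ),
          ∑ j, A k j * T s2 j - ∑ j, A k j * T s1 j = ∑ j, A k j * (T s2 j - T s1 j) := by
        intro k s1 s2
        rw [← Finset.sum_sub_distrib]
        exact Finset.sum_congr rfl fun j _ => by ring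
      have hT'le : ∀ k : K, ∑ j, A k j * T'v j ≤ 1 := by
        intro k
        have hfd : HasDerivAt (fun s => s - ∑ j, A k j * T s j)
            (1 - ∑ j, A k j * T'v j) t0 := (hasDerivAt_id t0).sub (hAsum k)
        have h0 := deriv_nonneg_of_right_mono hfd (by
          intro z hz _
          have h5 := hTle t0 z ht0pos.le hz.le k
          rw [← hdiffsum k t0 z] at h5
          linarith)
        linarith
      have hT'eq : ∀ k ∈ KI, ∑ j, A k j * T'v j = 1 := by
        intro k hk
        have haff : (fun s => ∑ j, A k j * T s j) =ᶠ[nhds t0]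
            (fun s => s - t0 + ∑ j, A k j * T t0 j) := by
          filter_upwards [Ioi_mem_nhds ht0pos] with s hs
          rcases le_total s t0 with h | h
          · have h5 := hTIeq s t0 (le_of_lt hs) h k hk
            rw [← hdiffsum k s t0] at h5
            linarith
          · have h5 := hTIeq t0 s ht0pos.le h k hk
            rw [← hdiffsum k t0 s] at h5
            linarith
        have haffd : HasDerivAt (fun s : ℝ => s - t0 + ∑ j, A k j * T t0 j) 1 t0 := by
          simpa using ((hasDerivAt_id t0).sub_const t0).add_const (∑ j, A k j * T t0 j)
        exact (hAsum k).unique (haffd.congr_of_eventuallyEq haff)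
      have hT'alloc : T'v ∈ Alloc A KI := ⟨hT'nn, hT'le, hT'eq⟩
      have hZd : ∀ i', HasDerivAt (fun s => Z s i') (- ∑ j, R i' j * T'v j) t0 := by
        intro i'
        have hform : HasDerivAt (fun s => Z 0 i' - ∑ j, R i' j * T s j)
            (- ∑ j, R i' j * T'v j) t0 :=
          HasDerivAt.const_sub (Z 0 i')
            (HasDerivAt.fun_sum fun j _ => (hTd j).const_mul (R i' j))
        refine hform.congr_of_eventuallyEq ?_
        filter_upwards [Ioi_mem_nhds ht0pos] with s hs
        exact hZeq s (le_of_lt hs) i'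
      set W'v : ℝ := ∑ i'', ystar i'' * (- ∑ j, R i'' j * T'v j) with hW'vdef
      have hWd : HasDerivAt W W'v t0 := by
        rw [hWdef, hW'vdef]
        exact HasDerivAt.fun_sum fun i' _ => (hZd i').const_mul (ystar i')
      set Sv : ℝ := ∑ i', α i' * Z t0 i' * ∑ j, R i' j * T'v j with hSvdef
      have hMPt : Sv = sSup ((fun a => ∑ i', α i' * Z t0 i' * ∑ j, R i' j * a j) '' Alloc A KI) := by
        rw [hSvdef]
        exact hMP t0 ht0pos _ _ hZd hTd
      have hsupnn : 0 ≤ Sv := by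
        rw [hMPt]
        refine le_csSup ⟨∑ j, |∑ i', α i' * Z t0 i' * R i' j|, ?_⟩ ?_
        · rintro v ⟨a, haA, rfl⟩
          simp only
          rw [← sum_swap_helper a (fun i' => α i' * Z t0 i') R]
          refine Finset.sum_le_sum fun j _ => ?_
          calc a j * ∑ i', α i' * Z t0 i' * R i' j
              ≤ a j * |∑ i', α i' * Z t0 i' * R i' j| :=
                mul_le_mul_of_nonneg_left (le_abs_self _) (haA.1 j)
            _ ≤ 1 * |∑ i', α i' * Z t0 i' * R i' j| :=
                mul_le_mul_of_nonneg_right (haj1 a haA j) (abs_nonneg _)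
            _ = _ := one_mul _
        · refine ⟨xstar, hxA, ?_⟩
          simp only
          refine Finset.sum_eq_zero fun i' _ => ?_
          rw [hSPP.1.1.1 i', mul_zero]
      have hW'nn : 0 ≤ W'v := by
        have h5 := hyRa T'v hT'alloc
        have h6 : W'v = - ∑ i', ystar i' * ∑ j, R i' j * T'v j := by
          rw [hW'vdef, ← Finset.sum_neg_distrib]
          exact Finset.sum_congr rfl fun i' _ => by ring
        rw [h6]
        linarith
      have hWnn : 0 ≤ W t0 := by
        rw [hWdef]
        exact Finset.sum_nonneg fun i' _ => mul_nonneg (hynn i') (hZnn t0 ht0pos.le i')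
      have hEd : ∀ i', HasDerivAt (fun s => Z s i' - ζ i' * W s)
          ((- ∑ j, R i' j * T'v j) - ζ i' * W'v) t0 :=
        fun i' => (hZd i').sub (hWd.const_mul (ζ i'))
      have hgd : HasDerivAt g (∑ i', α i' *
          (((2:ℕ):ℝ) * (Z t0 i' - ζ i' * W t0) ^ (2-1) *
            ((- ∑ j, R i' j * T'v j) - ζ i' * W'v))) t0 := by
        rw [hgdef]
        exact HasDerivAt.fun_sum fun i' _ => ((hEd i').pow 2).const_mul (α i')
      refine ⟨_, ?_, hgd⟩
      have hWt0 : ∑ i', ystar i' * Z t0 i' = W t0 := by rw [hWdef]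
      have hpoint : ∀ i', α i' *
          (((2:ℕ):ℝ) * (Z t0 i' - ζ i' * W t0) ^ (2-1) *
            ((- ∑ j, R i' j * T'v j) - ζ i' * W'v))
          = 2 * (α i' * Z t0 i' * (- ∑ j, R i' j * T'v j))
            - 2 * W'v / κ * (ystar i' * Z t0 i')
            - 2 * W t0 / κ * (ystar i' * (- ∑ j, R i' j * T'v j))
            + 2 * W t0 * W'v / κ / κ * (ystar i' ^ 2 / α i') := by
        intro i'
        rw [hζval i']
        have hα' := (hα i').ne'
        have hκ' := hκpos.ne'
        norm_num
        field_simp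
        ring
      have hsum1 : ∑ i', α i' * Z t0 i' * (- ∑ j, R i' j * T'v j) = - Sv := by
        rw [hSvdef, ← Finset.sum_neg_distrib]
        exact Finset.sum_congr rfl fun i' _ => by ring
      have hDval : (∑ i', α i' *
          (((2:ℕ):ℝ) * (Z t0 i' - ζ i' * W t0) ^ (2-1) *
            ((- ∑ j, R i' j * T'v j) - ζ i' * W'v)))
          = 2 * (- Sv) - 2 * W'v / κ * W t0 - 2 * W t0 / κ * W'v
            + 2 * W t0 * W'v / κ / κ * κ := by
        rw [Finset.sum_congr rfl fun i' _ => hpoint i']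
        rw [Finset.sum_add_distrib, Finset.sum_sub_distrib, Finset.sum_sub_distrib,
          ← Finset.mul_sum, ← Finset.mul_sum, ← Finset.mul_sum, ← Finset.mul_sum]
        rw [hsum1, hWt0, ← hW'vdef, ← hκdef]
      rw [hDval]
      have hfrac : 2 * W t0 * W'v / κ / κ * κ = 2 * W t0 * W'v / κ := by
        field_simp
      rw [hfrac]
      have hprod : 0 ≤ 2 * W t0 * W'v / κ :=
        div_nonneg (by nlinarith) hκpos.le
      have hprod2 : 0 ≤ 2 * W'v / κ * W t0 :=
        mul_nonneg (div_nonneg (by linarith) hκpos.le) hWnn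
      have he1 : 2 * W'v / κ * W t0 = 2 * W t0 * W'v / κ := by ring
      have he2 : 2 * W t0 / κ * W'v = 2 * W t0 * W'v / κ := by ring
      rw [he1, he2]
      linarith
    -- Lipschitz bound for g on [τ₁, b]
    have hCRnn : ∀ i', 0 ≤ ∑ j, |R i' j| :=
      fun i' => Finset.sum_nonneg fun j _ => abs_nonneg _
    have hZb : ∀ (i' : I) s, 0 ≤ s → s ≤ b →
        |Z s i'| ≤ |Z 0 i'| + (∑ j, |R i' j|) * b := by
      intro i' s hs hsb
      have h1 := hZdiff i' 0 s le_rfl hs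
      have h2 : (∑ j, |R i' j|) * (s - 0) ≤ (∑ j, |R i' j|) * b :=
        mul_le_mul_of_nonneg_left (by linarith) (hCRnn i')
      have h3 : |Z s i'| ≤ |Z 0 i'| + |Z s i' - Z 0 i'| := by
        calc |Z s i'| = |Z 0 i' + (Z s i' - Z 0 i')| := by congr 1; ring
          _ ≤ |Z 0 i'| + |Z s i' - Z 0 i'| := abs_add_le _ _
      linarith
    have hMZnn : ∀ i', 0 ≤ |Z 0 i'| + (∑ j, |R i' j|) * b :=
      fun i' => add_nonneg (abs_nonneg _) (mul_nonneg (hCRnn i') hb0)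
    have hWb : ∀ s, 0 ≤ s → s ≤ b →
        |W s| ≤ ∑ i', |ystar i'| * (|Z 0 i'| + (∑ j, |R i' j|) * b) := by
      intro s hs hsb
      rw [hWdef]
      refine le_trans (Finset.abs_sum_le_sum_abs _ _) (Finset.sum_le_sum fun i' _ => ?_)
      rw [abs_mul]
      exact mul_le_mul_of_nonneg_left (hZb i' s hs hsb) (abs_nonneg _)
    have hMWnn : 0 ≤ ∑ i', |ystar i'| * (|Z 0 i'| + (∑ j, |R i' j|) * b) :=
      Finset.sum_nonneg fun i' _ => mul_nonneg (abs_nonneg _) (hMZnn i')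
    have habs_sub : ∀ x y : ℝ, |x - y| ≤ |x| + |y| := by
      intro x y
      calc |x - y| = |x + -y| := by rw [sub_eq_add_neg]
        _ ≤ |x| + |-y| := abs_add_le _ _
        _ = |x| + |y| := by rw [abs_neg]
    have hEb : ∀ (i' : I) s, 0 ≤ s → s ≤ b →
        |Z s i' - ζ i' * W s| ≤ (|Z 0 i'| + (∑ j, |R i' j|) * b)
          + |ζ i'| * ∑ i'', |ystar i''| * (|Z 0 i''| + (∑ j, |R i'' j|) * b) := by
      intro i' s hs hsb
      refine le_trans (habs_sub _ _) ?_
      refine add_le_add (hZb i' s hs hsb) ?_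
      rw [abs_mul]
      exact mul_le_mul_of_nonneg_left (hWb s hs hsb) (abs_nonneg _)
    have hEdiff : ∀ (i' : I) s1 s2, 0 ≤ s1 → s1 ≤ s2 →
        |(Z s2 i' - ζ i' * W s2) - (Z s1 i' - ζ i' * W s1)|
          ≤ ((∑ j, |R i' j|) + |ζ i'| * ∑ i'', |ystar i''| * ∑ j, |R i'' j|) * (s2 - s1) := by
      intro i' s1 s2 h1 h2
      have e1 : (Z s2 i' - ζ i' * W s2) - (Z s1 i' - ζ i' * W s1)
          = (Z s2 i' - Z s1 i') - ζ i' * (W s2 - W s1) := by ring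
      rw [e1]
      refine le_trans (habs_sub _ _) ?_
      have h3 : |ζ i' * (W s2 - W s1)|
          ≤ |ζ i'| * ((∑ i'', |ystar i''| * ∑ j, |R i'' j|) * (s2 - s1)) := by
        rw [abs_mul]
        exact mul_le_mul_of_nonneg_left (hWdiff s1 s2 h1 h2) (abs_nonneg _)
      have h4 := hZdiff i' s1 s2 h1 h2
      calc |Z s2 i' - Z s1 i'| + |ζ i' * (W s2 - W s1)|
          ≤ (∑ j, |R i' j|) * (s2 - s1)
            + |ζ i'| * ((∑ i'', |ystar i''| * ∑ j, |R i'' j|) * (s2 - s1)) := add_le_add h4 h3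
        _ = ((∑ j, |R i' j|) + |ζ i'| * ∑ i'', |ystar i''| * ∑ j, |R i'' j|) * (s2 - s1) := by
            ring
    have hCEnn : ∀ i', 0 ≤ (∑ j, |R i' j|) + |ζ i'| * ∑ i'', |ystar i''| * ∑ j, |R i'' j| :=
      fun i' => add_nonneg (hCRnn i') (mul_nonneg (abs_nonneg _)
        (Finset.sum_nonneg fun i'' _ => mul_nonneg (abs_nonneg _) (hCRnn i'')))
    have hMEnn : ∀ i', 0 ≤ (|Z 0 i'| + (∑ j, |R i' j|) * b)
        + |ζ i'| * ∑ i'', |ystar i''| * (|Z 0 i''| + (∑ j, |R i'' j|) * b) :=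
      fun i' => add_nonneg (hMZnn i') (mul_nonneg (abs_nonneg _) hMWnn)
    have hLnn : 0 ≤ ∑ i', α i' *
        (2 * ((|Z 0 i'| + (∑ j, |R i' j|) * b)
          + |ζ i'| * ∑ i'', |ystar i''| * (|Z 0 i''| + (∑ j, |R i'' j|) * b)))
        * ((∑ j, |R i' j|) + |ζ i'| * ∑ i'', |ystar i''| * ∑ j, |R i'' j|) :=
      Finset.sum_nonneg fun i' _ => mul_nonneg (mul_nonneg (hα i').le
        (by linarith [hMEnn i'])) (hCEnn i')
    have hglip : ∀ s1 s2, τ₁ ≤ s1 → s1 ≤ s2 → s2 ≤ b →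
        |g s2 - g s1| ≤ (∑ i', α i' *
          (2 * ((|Z 0 i'| + (∑ j, |R i' j|) * b)
            + |ζ i'| * ∑ i'', |ystar i''| * (|Z 0 i''| + (∑ j, |R i'' j|) * b)))
          * ((∑ j, |R i' j|) + |ζ i'| * ∑ i'', |ystar i''| * ∑ j, |R i'' j|)) * (s2 - s1) := by
      intro s1 s2 h1 h2 h3
      have h10 : 0 ≤ s1 := le_trans hτ₁ h1
      have h20 : 0 ≤ s2 := le_trans h10 h2
      have h1b : s1 ≤ b := le_trans h2 h3
      have e1 : g s2 - g s1 = ∑ i', α i' * ((Z s2 i' - ζ i' * W s2) ^ 2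
          - (Z s1 i' - ζ i' * W s1) ^ 2) := by
        rw [hgdef]
        rw [← Finset.sum_sub_distrib]
        exact Finset.sum_congr rfl fun i' _ => by ring
      rw [e1, Finset.sum_mul]
      refine le_trans (Finset.abs_sum_le_sum_abs _ _) (Finset.sum_le_sum fun i' _ => ?_)
      rw [abs_mul, abs_of_nonneg (hα i').le]
      have e2 : (Z s2 i' - ζ i' * W s2) ^ 2 - (Z s1 i' - ζ i' * W s1) ^ 2
          = ((Z s2 i' - ζ i' * W s2) - (Z s1 i' - ζ i' * W s1))
            * ((Z s2 i' - ζ i' * W s2) + (Z s1 i' - ζ i' * W s1)) := by ring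
      rw [e2, abs_mul]
      have h5 := hEdiff i' s1 s2 h10 h2
      have h6 : |(Z s2 i' - ζ i' * W s2) + (Z s1 i' - ζ i' * W s1)|
          ≤ 2 * ((|Z 0 i'| + (∑ j, |R i' j|) * b)
            + |ζ i'| * ∑ i'', |ystar i''| * (|Z 0 i''| + (∑ j, |R i'' j|) * b)) := by
        refine le_trans (abs_add_le _ _) ?_
        have := hEb i' s2 h20 h3
        have := hEb i' s1 h10 h1b
        linarith
      have h7 : |(Z s2 i' - ζ i' * W s2) - (Z s1 i' - ζ i' * W s1)|
          * |(Z s2 i' - ζ i' * W s2) + (Z s1 i' - ζ i' * W s1)|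
          ≤ (((∑ j, |R i' j|) + |ζ i'| * ∑ i'', |ystar i''| * ∑ j, |R i'' j|) * (s2 - s1))
            * (2 * ((|Z 0 i'| + (∑ j, |R i' j|) * b)
              + |ζ i'| * ∑ i'', |ystar i''| * (|Z 0 i''| + (∑ j, |R i'' j|) * b))) :=
        mul_le_mul h5 h6 (abs_nonneg _)
          (mul_nonneg (hCEnn i') (by linarith))
      calc α i' * (|(Z s2 i' - ζ i' * W s2) - (Z s1 i' - ζ i' * W s1)|
            * |(Z s2 i' - ζ i' * W s2) + (Z s1 i' - ζ i' * W s1)|)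
          ≤ α i' * ((((∑ j, |R i' j|) + |ζ i'| * ∑ i'', |ystar i''| * ∑ j, |R i'' j|) * (s2 - s1))
            * (2 * ((|Z 0 i'| + (∑ j, |R i' j|) * b)
              + |ζ i'| * ∑ i'', |ystar i''| * (|Z 0 i''| + (∑ j, |R i'' j|) * b)))) :=
            mul_le_mul_of_nonneg_left h7 (hα i').le
        _ = α i' * (2 * ((|Z 0 i'| + (∑ j, |R i' j|) * b)
              + |ζ i'| * ∑ i'', |ystar i''| * (|Z 0 i''| + (∑ j, |R i'' j|) * b)))
            * ((∑ j, |R i' j|) + |ζ i'| * ∑ i'', |ystar i''| * ∑ j, |R i'' j|) * (s2 - s1) := by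
            ring
    have hdec := decay hblela hLnn hglip _ hNNnull hder
    have hgbnn : 0 ≤ g b := by
      rw [hgdef]
      exact Finset.sum_nonneg fun i' _ => mul_nonneg (hα i').le (sq_nonneg _)
    rw [hgτ] at hdec
    linarith
  -- conclusion
  intro t ht i
  have hgt := hgdecay t ht
  rw [hgdef] at hgt
  have hterm := (Finset.sum_eq_zero_iff_of_nonneg
    (fun i' _ => mul_nonneg (hα i').le (sq_nonneg _))).mp hgt i (Finset.mem_univ i)
  have h2 : (Z t i - ζ i * W t) ^ 2 = 0 := by
    rcases mul_eq_zero.mp hterm with h | h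
    · exact absurd h (hα i).ne'
    · exact h
  have h3 : Z t i - ζ i * W t = 0 := by
    exact pow_eq_zero_iff (n := 2) (by norm_num) |>.mp h2
  rw [hWdef] at h3
  simp only at h3
  rw [hζdef] at h3
  linarith
end

section
/- Consider a sequence of network data (R^r, A), r ∈ ℕ, and limit data (R, A), sharing the same index sets and consumption matrix A, with R^r → R entrywise as r → ∞. Assume: the static planning problem for (R, A) has a unique optimal solution (ρ*, x*) with ρ* = 1; for each r the dual problem for (R^r, A) has a unique optimal solution (y^r, z^r), which is nonnegative, and the optimal value ρ^r of the static planning problem for (R^r, A) converges to 1; and the dual problem for (R, A) has a unique optimal solution (y*, z*), which is nonnegative. Then (y^r, z^r) → (y*, z*) as r → ∞. -/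
set_option linter.unusedSectionVars false


open Finset

section Aux
open Filter
variable {I J K : Type*} [Fintype I] [Fintype J] [Fintype K] [DecidableEq J] [DecidableEq K]
variable {R : I → J → ℝ} {A : K → J → ℝ} {JI : Finset J} {KI : Finset K}

lemma A_nonneg (hND : NetData A JI KI) (k : K) (j : J) : 0 ≤ A k j := by
  rcases hND.1 k j with h | h <;> simp [h]

lemma sum_A_KI_ge (hND : NetData A JI KI) {j : J} (hj : j ∈ JI) :
    1 ≤ ∑ k ∈ KI, A k j := by
  obtain ⟨k₀, hk₀⟩ := hND.2.2 j
  have hk₀KI : k₀ ∈ KI := by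
    by_contra h
    have := hND.2.1 k₀ j (Or.inr ⟨h, hj⟩)
    rw [this] at hk₀; norm_num at hk₀
  calc (1:ℝ) = A k₀ j := hk₀.symm
    _ ≤ ∑ k ∈ KI, A k j := Finset.single_le_sum (fun k _ => A_nonneg hND k j) hk₀KI

lemma sum_A_KIc_ge (hND : NetData A JI KI) {j : J} (hj : j ∉ JI) :
    1 ≤ ∑ k ∈ KIᶜ, A k j := by
  obtain ⟨k₀, hk₀⟩ := hND.2.2 j
  have hk₀KI : k₀ ∈ KIᶜ := by
    rw [Finset.mem_compl]
    by_contra h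
    have := hND.2.1 k₀ j (Or.inl ⟨h, hj⟩)
    rw [this] at hk₀; norm_num at hk₀
  calc (1:ℝ) = A k₀ j := hk₀.symm
    _ ≤ ∑ k ∈ KIᶜ, A k j := Finset.single_le_sum (fun k _ => A_nonneg hND k j) hk₀KI

/-- For an input processor, only input activities contribute. -/
lemma sum_JI_eq (hND : NetData A JI KI) {k : K} (hk : k ∈ KI) (x : J → ℝ) :
    ∑ j ∈ JI, A k j * x j = ∑ j, A k j * x j :=
  Finset.sum_subset (Finset.subset_univ JI)
    (fun j _ hj => by rw [hND.2.1 k j (Or.inl ⟨hk, hj⟩), zero_mul])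

lemma sum_JIc_eq (hND : NetData A JI KI) {k : K} (hk : k ∉ KI) (x : J → ℝ) :
    ∑ j ∈ JIᶜ, A k j * x j = ∑ j, A k j * x j :=
  Finset.sum_subset (Finset.subset_univ JIᶜ)
    (fun j _ hj => by
      rw [Finset.mem_compl, not_not] at hj
      rw [hND.2.1 k j (Or.inr ⟨hk, hj⟩), zero_mul])

lemma weak_duality (hND : NetData A JI KI) {ρ : ℝ} {x : J → ℝ} {y : I → ℝ} {z : K → ℝ}
    (hx : SPPfeas R A KI ρ x) (hyz : Dfeas R A JI KI y z) :
    ∑ k ∈ KI, z k ≤ ρ := by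
  obtain ⟨hRx, hin, hserv, hxnn⟩ := hx
  obtain ⟨hdin, hdserv, hsum1, hznn⟩ := hyz
  have key : ∑ j, (∑ i, y i * R i j) * x j = 0 := by
    calc ∑ j, (∑ i, y i * R i j) * x j = ∑ j, ∑ i, y i * (R i j * x j) := by
          simp [Finset.sum_mul, mul_assoc]
      _ = ∑ i, ∑ j, y i * (R i j * x j) := Finset.sum_comm
      _ = ∑ i, y i * ∑ j, R i j * x j := by simp [Finset.mul_sum]
      _ = 0 := by simp [hRx]
  have split : ∑ j ∈ JI, (∑ i, y i * R i j) * x j + ∑ j ∈ JIᶜ, (∑ i, y i * R i j) * x j = 0 := by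
    rw [Finset.sum_add_sum_compl]; exact key
  have b1 : ∑ j ∈ JI, (∑ i, y i * R i j) * x j ≤ -∑ k ∈ KI, z k := by
    have h1 : ∑ j ∈ JI, (∑ i, y i * R i j) * x j
        ≤ ∑ j ∈ JI, (-∑ k ∈ KI, z k * A k j) * x j :=
      Finset.sum_le_sum fun j hj => mul_le_mul_of_nonneg_right (hdin j hj) (hxnn j)
    have h2 : ∑ j ∈ JI, (∑ k ∈ KI, z k * A k j) * x j = ∑ k ∈ KI, z k := by
      calc ∑ j ∈ JI, (∑ k ∈ KI, z k * A k j) * x j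
          = ∑ k ∈ KI, ∑ j ∈ JI, z k * (A k j * x j) := by
            rw [Finset.sum_comm]
            exact Finset.sum_congr rfl fun j _ => by simp [Finset.sum_mul, mul_assoc]
        _ = ∑ k ∈ KI, z k * ∑ j ∈ JI, A k j * x j := by simp [Finset.mul_sum]
        _ = ∑ k ∈ KI, z k := by
            refine Finset.sum_congr rfl fun k hk => ?_
            rw [sum_JI_eq hND hk, hin k hk, mul_one]
    calc ∑ j ∈ JI, (∑ i, y i * R i j) * x j
        ≤ ∑ j ∈ JI, (-∑ k ∈ KI, z k * A k j) * x j := h1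
      _ = -∑ j ∈ JI, (∑ k ∈ KI, z k * A k j) * x j := by simp [Finset.sum_neg_distrib]
      _ = -∑ k ∈ KI, z k := by rw [h2]
  have b2 : ∑ j ∈ JIᶜ, (∑ i, y i * R i j) * x j ≤ ρ := by
    have h1 : ∑ j ∈ JIᶜ, (∑ i, y i * R i j) * x j
        ≤ ∑ j ∈ JIᶜ, (∑ k ∈ KIᶜ, z k * A k j) * x j :=
      Finset.sum_le_sum fun j hj =>
        mul_le_mul_of_nonneg_right (hdserv j (Finset.mem_compl.mp hj)) (hxnn j)
    have h2 : ∑ j ∈ JIᶜ, (∑ k ∈ KIᶜ, z k * A k j) * x j ≤ ρ := by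
      calc ∑ j ∈ JIᶜ, (∑ k ∈ KIᶜ, z k * A k j) * x j
          = ∑ k ∈ KIᶜ, ∑ j ∈ JIᶜ, z k * (A k j * x j) := by
            rw [Finset.sum_comm]
            exact Finset.sum_congr rfl fun j _ => by simp [Finset.sum_mul, mul_assoc]
        _ = ∑ k ∈ KIᶜ, z k * ∑ j ∈ JIᶜ, A k j * x j := by simp [Finset.mul_sum]
        _ ≤ ∑ k ∈ KIᶜ, z k * ρ := by
            refine Finset.sum_le_sum fun k hk => ?_
            have hk' := Finset.mem_compl.mp hk
            rw [sum_JIc_eq hND hk' x]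
            exact mul_le_mul_of_nonneg_left (hserv k hk') (hznn k hk')
        _ = ρ := by rw [← Finset.sum_mul, hsum1, one_mul]
    exact h1.trans h2
  linarith

/-- Perturbed dual feasible point for a nearby matrix `R'`. -/
lemma perturb_feas (hND : NetData A JI KI) {y : I → ℝ} {z : K → ℝ}
    (hyz : Dfeas R A JI KI y z) (hznn : ∀ k, 0 ≤ z k)
    {R' : I → J → ℝ} {θ δ : ℝ} (hθ0 : 0 ≤ θ) (hθ1 : θ ≤ 1) (hδ : 0 ≤ δ)
    (hRd : ∀ j, |∑ i, y i * (R' i j - R i j)| ≤ δ)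
    (hθδ : θ * δ ≤ (1 - θ) / (KIᶜ.card : ℝ)) :
    Dfeas R' A JI KI (fun i => θ * y i)
      (fun k => if k ∈ KI then θ * z k - θ * δ else θ * z k + (1 - θ) / (KIᶜ.card : ℝ)) := by
  obtain ⟨hdin, hdserv, hsum1, _⟩ := hyz
  have hcard : (0:ℝ) < (KIᶜ.card : ℝ) := by
    by_contra h
    push_neg at h
    have : KIᶜ = ∅ := Finset.card_eq_zero.mp (by exact_mod_cast le_antisymm (by exact_mod_cast h) (Nat.zero_le _))
    rw [this] at hsum1
    simp at hsum1
  have hslack : 0 ≤ (1 - θ) / (KIᶜ.card : ℝ) :=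
    le_trans (mul_nonneg hθ0 hδ) hθδ
  have herr : ∀ j, ∑ i, y i * R' i j ≤ ∑ i, y i * R i j + δ := by
    intro j
    have h1 : ∑ i, y i * R' i j - ∑ i, y i * R i j = ∑ i, y i * (R' i j - R i j) := by
      rw [← Finset.sum_sub_distrib]
      exact Finset.sum_congr rfl fun i _ => by ring
    have := (abs_le.mp (hRd j)).2
    linarith [h1 ▸ this]
  refine ⟨fun j hj => ?_, fun j hj => ?_, ?_, fun k hk => ?_⟩
  · -- input activities
    have hA1 : 1 ≤ ∑ k ∈ KI, A k j := sum_A_KI_ge hND hj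
    have hLHS : ∑ i, θ * y i * R' i j = θ * ∑ i, y i * R' i j := by
      rw [Finset.mul_sum]; exact Finset.sum_congr rfl fun i _ => by ring
    have hRHS : ∑ k ∈ KI, (if k ∈ KI then θ * z k - θ * δ else θ * z k + (1 - θ) / (KIᶜ.card : ℝ)) * A k j
        = θ * ∑ k ∈ KI, z k * A k j - θ * δ * ∑ k ∈ KI, A k j := by
      rw [Finset.mul_sum, Finset.mul_sum, ← Finset.sum_sub_distrib]
      refine Finset.sum_congr rfl fun k hk => ?_
      rw [if_pos hk]; ring
    rw [hLHS, hRHS]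
    have h1 : θ * ∑ i, y i * R' i j ≤ θ * (-∑ k ∈ KI, z k * A k j) + θ * δ := by
      have := herr j
      have h2 : ∑ i, y i * R i j + δ ≤ -∑ k ∈ KI, z k * A k j + δ := by
        linarith [hdin j hj]
      nlinarith [le_trans this h2]
    have h3 : θ * δ ≤ θ * δ * ∑ k ∈ KI, A k j :=
      le_mul_of_one_le_right (mul_nonneg hθ0 hδ) hA1
    linarith
  · -- service activities
    have hA1 : 1 ≤ ∑ k ∈ KIᶜ, A k j := sum_A_KIc_ge hND hj
    have hLHS : ∑ i, θ * y i * R' i j = θ * ∑ i, y i * R' i j := by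
      rw [Finset.mul_sum]; exact Finset.sum_congr rfl fun i _ => by ring
    have hRHS : ∑ k ∈ KIᶜ, (if k ∈ KI then θ * z k - θ * δ else θ * z k + (1 - θ) / (KIᶜ.card : ℝ)) * A k j
        = θ * ∑ k ∈ KIᶜ, z k * A k j + (1 - θ) / (KIᶜ.card : ℝ) * ∑ k ∈ KIᶜ, A k j := by
      rw [Finset.mul_sum, Finset.mul_sum, ← Finset.sum_add_distrib]
      refine Finset.sum_congr rfl fun k hk => ?_
      rw [if_neg (Finset.mem_compl.mp hk)]; ring
    rw [hLHS, hRHS]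
    have h1 : θ * ∑ i, y i * R' i j ≤ θ * ∑ k ∈ KIᶜ, z k * A k j + θ * δ := by
      have := herr j
      have h2 : ∑ i, y i * R i j + δ ≤ ∑ k ∈ KIᶜ, z k * A k j + δ := by
        linarith [hdserv j hj]
      nlinarith [le_trans this h2]
    have h3 : (1 - θ) / (KIᶜ.card : ℝ) ≤ (1 - θ) / (KIᶜ.card : ℝ) * ∑ k ∈ KIᶜ, A k j :=
      le_mul_of_one_le_right hslack hA1
    linarith
  · -- sum over KIᶜ equals 1
    have : ∑ k ∈ KIᶜ, (if k ∈ KI then θ * z k - θ * δ else θ * z k + (1 - θ) / (KIᶜ.card : ℝ))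
        = θ * ∑ k ∈ KIᶜ, z k + (KIᶜ.card : ℝ) * ((1 - θ) / (KIᶜ.card : ℝ)) := by
      rw [show ((KIᶜ.card : ℝ) * ((1 - θ) / (KIᶜ.card : ℝ)) : ℝ) = ∑ _k ∈ KIᶜ, (1 - θ) / (KIᶜ.card : ℝ) by
        rw [Finset.sum_const, nsmul_eq_mul]]
      rw [Finset.mul_sum, ← Finset.sum_add_distrib]
      refine Finset.sum_congr rfl fun k hk => ?_
      rw [if_neg (Finset.mem_compl.mp hk)]
    rw [this, hsum1, mul_one, mul_div_cancel₀ _ (ne_of_gt hcard)]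
    ring
  · -- nonneg on service processors
    simp only [if_neg hk]
    exact add_nonneg (mul_nonneg hθ0 (hznn k)) hslack

/-- Value of the perturbed point on `KI`. -/
lemma perturb_value {z : K → ℝ} (θ δ : ℝ) :
    ∑ k ∈ KI, (if k ∈ KI then θ * z k - θ * δ else θ * z k + (1 - θ) / (KIᶜ.card : ℝ))
      = θ * ∑ k ∈ KI, z k - θ * δ * (KI.card : ℝ) := by
  rw [Finset.mul_sum, show (θ * δ * (KI.card : ℝ) : ℝ) = ∑ _k ∈ KI, θ * δ by
    rw [Finset.sum_const, nsmul_eq_mul]; ring]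
  rw [← Finset.sum_sub_distrib]
  refine Finset.sum_congr rfl fun k hk => ?_
  rw [if_pos hk]

lemma value_lower (hND : NetData A JI KI) {ystar : I → ℝ} {zstar : K → ℝ}
    (hDf : Dfeas R A JI KI ystar zstar) (hznn : ∀ k, 0 ≤ zstar k)
    {Rseq : ℕ → I → J → ℝ}
    (hconv : ∀ i j, Tendsto (fun r => Rseq r i j) atTop (nhds (R i j)))
    {yr : ℕ → I → ℝ} {zr : ℕ → K → ℝ}
    (hDr : ∀ r, Dopt (Rseq r) A JI KI (yr r) (zr r)) :
    ∀ ε > 0, ∀ᶠ r in atTop, (∑ k ∈ KI, zstar k) - ε ≤ ∑ k ∈ KI, zr r k := by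
  intro ε hε
  have hS : 0 ≤ ∑ k ∈ KI, zstar k := Finset.sum_nonneg fun k _ => hznn k
  have hcard : (0:ℝ) < (KIᶜ.card : ℝ) := by
    by_contra h
    push_neg at h
    have : KIᶜ = ∅ := Finset.card_eq_zero.mp (by exact_mod_cast le_antisymm (by exact_mod_cast h) (Nat.zero_le _))
    have h1 := hDf.2.2.1
    rw [this] at h1
    simp at h1
  set S := ∑ k ∈ KI, zstar k with hSdef
  set c := (KIᶜ.card : ℝ) with hcdef
  set m := (KI.card : ℝ) with hmdef
  have hm : 0 ≤ m := by positivity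
  set θ := 1 - min 1 (ε / (2 * (S + 1))) with hθdef
  have hmin_pos : 0 < min 1 (ε / (2 * (S + 1))) := lt_min one_pos (by positivity)
  have hθ0 : 0 ≤ θ := by
    have : min 1 (ε / (2 * (S + 1))) ≤ 1 := min_le_left _ _
    rw [hθdef]; linarith
  have hθ1 : θ ≤ 1 := by rw [hθdef]; linarith
  have h1θ : 0 < 1 - θ := by rw [hθdef]; linarith
  have h1θ' : 1 - θ ≤ ε / (2 * (S + 1)) := by
    rw [hθdef]; linarith [min_le_right 1 (ε / (2 * (S + 1)))]
  set δ₀ := min (ε / (2 * (m + 1))) ((1 - θ) / c) with hδdef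
  have hδpos : 0 < δ₀ := lt_min (by positivity) (by positivity)
  have hd1 : δ₀ ≤ ε / (2 * (m + 1)) := min_le_left _ _
  have hd2 : δ₀ ≤ (1 - θ) / c := min_le_right _ _
  have hθδ : θ * δ₀ ≤ (1 - θ) / c := by nlinarith
  -- error terms tend to zero
  have herr : ∀ j : J, Tendsto (fun r => ∑ i, ystar i * (Rseq r i j - R i j)) atTop (nhds 0) := by
    intro j
    have : Tendsto (fun r => ∑ i, ystar i * (Rseq r i j - R i j)) atTop
        (nhds (∑ i, ystar i * (R i j - R i j))) := by
      apply tendsto_finset_sum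
      intro i _
      exact (tendsto_const_nhds.mul ((hconv i j).sub tendsto_const_nhds))
    simpa using this
  have hev : ∀ᶠ r in atTop, ∀ j : J, |∑ i, ystar i * (Rseq r i j - R i j)| ≤ δ₀ := by
    apply Filter.eventually_all.mpr
    intro j
    have := Metric.tendsto_nhds.mp (herr j) δ₀ hδpos
    filter_upwards [this] with r hr
    rw [Real.dist_eq, sub_zero] at hr
    exact le_of_lt hr
  filter_upwards [hev] with r hr
  have hfeas := perturb_feas hND hDf hznn hθ0 hθ1 (le_of_lt hδpos) hr hθδ
  have hopt := (hDr r).2 _ _ hfeas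
  rw [perturb_value] at hopt
  rw [← hmdef] at hopt
  clear_value S c m θ δ₀
  -- now: θ * S - θ * δ₀ * m ≥ S - ε
  have key1 : (1 - θ) * S ≤ ε / 2 := by
    have h2 : (1 - θ) * S ≤ ε / (2 * (S + 1)) * S :=
      mul_le_mul_of_nonneg_right h1θ' hS
    have h3 : ε / (2 * (S + 1)) * S ≤ ε / 2 := by
      rw [div_mul_eq_mul_div, div_le_div_iff₀ (by positivity) (by norm_num)]
      nlinarith
    linarith
  have key2 : θ * δ₀ * m ≤ ε / 2 := by
    have h2 : θ * δ₀ * m ≤ δ₀ * m := by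
      nlinarith [mul_nonneg (mul_nonneg (by linarith : (0:ℝ) ≤ 1 - θ) hδpos.le) hm]
    have h3 : δ₀ * m ≤ ε / (2 * (m + 1)) * m := mul_le_mul_of_nonneg_right hd1 hm
    have h4 : ε / (2 * (m + 1)) * m ≤ ε / 2 := by
      rw [div_mul_eq_mul_div, div_le_div_iff₀ (by positivity) (by norm_num)]
      nlinarith
    linarith
  nlinarith

lemma z_bounded {ρr : ℕ → ℝ} {Rseq : ℕ → I → J → ℝ} {yr : ℕ → I → ℝ} {zr : ℕ → K → ℝ}
    (hND : NetData A JI KI)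
    (hDr : ∀ r, Dfeas (Rseq r) A JI KI (yr r) (zr r))
    (hzrnn : ∀ r k, 0 ≤ zr r k)
    (hρr : ∀ r, ∃ x, SPPopt (Rseq r) A KI (ρr r) x)
    (hρconv : Tendsto ρr atTop (nhds 1)) :
    ∃ Cz : ℝ, 0 ≤ Cz ∧ ∀ r k, zr r k ≤ Cz := by
  obtain ⟨Cρ, hCρ⟩ := hρconv.bddAbove_range
  refine ⟨max 1 Cρ, le_trans one_pos.le (le_max_left _ _), fun r k => ?_⟩
  by_cases hk : k ∈ KI
  · have h1 : zr r k ≤ ∑ k' ∈ KI, zr r k' :=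
      Finset.single_le_sum (fun k' _ => hzrnn r k') hk
    obtain ⟨x, hx⟩ := hρr r
    have h2 : ∑ k' ∈ KI, zr r k' ≤ ρr r := weak_duality hND hx.1 (hDr r)
    have h3 : ρr r ≤ Cρ := hCρ (Set.mem_range_self r)
    exact le_trans (le_trans h1 h2) (le_trans h3 (le_max_right _ _))
  · have h1 : zr r k ≤ ∑ k' ∈ KIᶜ, zr r k' :=
      Finset.single_le_sum (fun k' _ => hzrnn r k') (Finset.mem_compl.mpr hk)
    rw [(hDr r).2.2.1] at h1
    exact le_trans h1 (le_max_left _ _)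

lemma y_bounded {Rseq : ℕ → I → J → ℝ} {yr : ℕ → I → ℝ} {zr : ℕ → K → ℝ}
    {ystar : I → ℝ} {zstar : K → ℝ} {Cz : ℝ}
    (hND : NetData A JI KI)
    (hconv : ∀ i j, Tendsto (fun r => Rseq r i j) atTop (nhds (R i j)))
    (hDfr : ∀ r, Dfeas (Rseq r) A JI KI (yr r) (zr r))
    (hyrnn : ∀ r i, 0 ≤ yr r i) (hzrnn : ∀ r k, 0 ≤ zr r k)
    (hCz : 0 ≤ Cz) (hzb : ∀ r k, zr r k ≤ Cz)
    (hD : DuniqueOpt R A JI KI ystar zstar) :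
    ∃ C : ℝ, ∀ r, ‖yr r‖ ≤ C := by
  by_contra hC
  push_neg at hC
  -- frequent large norms
  have hfreq : ∀ n : ℕ, ∃ᶠ k in atTop, (n : ℝ) < ‖yr k‖ := by
    intro n
    by_contra h
    rw [Filter.not_frequently] at h
    obtain ⟨N, hN⟩ := Filter.eventually_atTop.mp h
    obtain ⟨r, hrC⟩ := hC ((n : ℝ) + ∑ k ∈ Finset.range N, ‖yr k‖)
    have hsum_nn : (0:ℝ) ≤ ∑ k ∈ Finset.range N, ‖yr k‖ :=
      Finset.sum_nonneg fun k _ => norm_nonneg _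
    rcases lt_or_ge r N with hrN | hrN
    · have : ‖yr r‖ ≤ ∑ k ∈ Finset.range N, ‖yr k‖ :=
        Finset.single_le_sum (fun k _ => norm_nonneg (yr k)) (Finset.mem_range.mpr hrN)
      have hn0 : (0:ℝ) ≤ (n:ℝ) := Nat.cast_nonneg n
      linarith
    · have := hN r hrN
      push_neg at this
      linarith
  obtain ⟨φ, hφmono, hφ⟩ := Filter.extraction_forall_of_frequently hfreq
  set u : ℕ → I → ℝ := fun n => ‖yr (φ (n + 1))‖⁻¹ • yr (φ (n + 1)) with hudef
  have hpos : ∀ n, 0 < ‖yr (φ (n + 1))‖ := fun n =>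
    lt_trans (by exact_mod_cast Nat.succ_pos n) (hφ (n + 1))
  have hu1 : ∀ n, ‖u n‖ = 1 := by
    intro n
    rw [hudef]
    simp only [norm_smul, norm_inv, norm_norm]
    rw [inv_mul_cancel₀ (ne_of_gt (hpos n))]
  have hmem : ∀ n, u n ∈ Metric.closedBall (0 : I → ℝ) 1 := by
    intro n
    rw [Metric.mem_closedBall, dist_zero_right, hu1 n]
  obtain ⟨ul, _, ψ, hψmono, hψlim⟩ :=
    (isCompact_closedBall (0 : I → ℝ) 1).tendsto_subseq hmem
  have hcoord : ∀ i, Tendsto (fun n => u (ψ n) i) atTop (nhds (ul i)) := fun i =>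
    ((continuous_apply i).tendsto ul).comp hψlim
  have hn1 : ‖ul‖ = 1 := by
    have h1 : Tendsto (fun n => ‖u (ψ n)‖) atTop (nhds ‖ul‖) :=
      (continuous_norm.tendsto ul).comp hψlim
    have h2 : Tendsto (fun n => ‖u (ψ n)‖) atTop (nhds 1) := by
      simpa [hu1] using (tendsto_const_nhds : Tendsto (fun _ : ℕ => (1:ℝ)) atTop (nhds 1))
    exact tendsto_nhds_unique h1 h2
  have hunn : ∀ i, 0 ≤ ul i := by
    intro i
    refine ge_of_tendsto (hcoord i) (Filter.Eventually.of_forall fun n => ?_)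
    rw [hudef]
    simp only [Pi.smul_apply, smul_eq_mul]
    exact mul_nonneg (inv_nonneg.mpr (norm_nonneg _)) (hyrnn _ i)
  -- the subsequence indices
  set σ : ℕ → ℕ := fun n => φ (ψ n + 1) with hσdef
  have hσtop : Tendsto σ atTop atTop := by
    apply hφmono.tendsto_atTop.comp
    exact tendsto_atTop_mono (fun n => Nat.le_succ (ψ n)) hψmono.tendsto_atTop
  have hntop : Tendsto (fun n => ‖yr (σ n)‖) atTop atTop := by
    apply tendsto_atTop_mono (fun n => (hφ (ψ n + 1)).le)
    exact tendsto_natCast_atTop_atTop.comp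
      (tendsto_atTop_mono (fun n => Nat.le_succ (ψ n)) hψmono.tendsto_atTop)
  have hcinv : Tendsto (fun n => ‖yr (σ n)‖⁻¹) atTop (nhds 0) :=
    tendsto_inv_atTop_zero.comp hntop
  -- uniform upper bound on dual LHS
  set B : ℝ := Cz * (Fintype.card K : ℝ) with hBdef
  have hBnn : 0 ≤ B := mul_nonneg hCz (Nat.cast_nonneg _)
  have hLHSb : ∀ r j, ∑ i, yr r i * Rseq r i j ≤ B := by
    intro r j
    by_cases hj : j ∈ JI
    · have h1 := (hDfr r).1 j hj
      have h2 : 0 ≤ ∑ k ∈ KI, zr r k * A k j :=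
        Finset.sum_nonneg fun k _ => mul_nonneg (hzrnn r k) (A_nonneg hND k j)
      linarith
    · have h1 := (hDfr r).2.1 j hj
      have h2 : ∑ k ∈ KIᶜ, zr r k * A k j ≤ B := by
        calc ∑ k ∈ KIᶜ, zr r k * A k j ≤ ∑ k ∈ KIᶜ, Cz := by
              refine Finset.sum_le_sum fun k _ => ?_
              have hA1 : A k j ≤ 1 := by rcases hND.1 k j with h | h <;> simp [h]
              calc zr r k * A k j ≤ Cz * 1 :=
                    mul_le_mul (hzb r k) hA1 (A_nonneg hND k j) hCz
                _ = Cz := mul_one Cz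
          _ = (KIᶜ.card : ℝ) * Cz := by rw [Finset.sum_const, nsmul_eq_mul]
          _ ≤ B := by
              rw [hBdef]
              have hcc : (KIᶜ.card : ℝ) ≤ (Fintype.card K : ℝ) := by
                exact_mod_cast Finset.card_le_univ _
              nlinarith
      linarith
  -- limit inequalities
  have hineq : ∀ j, ∑ i, ul i * R i j ≤ 0 := by
    intro j
    have hgl : Tendsto (fun n => ∑ i, u (ψ n) i * Rseq (σ n) i j) atTop
        (nhds (∑ i, ul i * R i j)) :=
      tendsto_finset_sum _ fun i _ => (hcoord i).mul ((hconv i j).comp hσtop)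
    have hub : ∀ n, ∑ i, u (ψ n) i * Rseq (σ n) i j ≤ ‖yr (σ n)‖⁻¹ * B := by
      intro n
      have hrw : ∑ i, u (ψ n) i * Rseq (σ n) i j
          = ‖yr (σ n)‖⁻¹ * ∑ i, yr (σ n) i * Rseq (σ n) i j := by
        rw [Finset.mul_sum]
        refine Finset.sum_congr rfl fun i _ => ?_
        rw [hudef]
        simp only [Pi.smul_apply, smul_eq_mul, hσdef]
        ring
      rw [hrw]
      exact mul_le_mul_of_nonneg_left (hLHSb (σ n) j) (inv_nonneg.mpr (norm_nonneg _))
    have hrhs : Tendsto (fun n => ‖yr (σ n)‖⁻¹ * B) atTop (nhds 0) := by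
      simpa using hcinv.mul_const B
    exact le_of_tendsto_of_tendsto' hgl hrhs hub
  -- build another dual optimum, contradicting uniqueness
  have hsplit : ∀ j, ∑ i, (ystar i + ul i) * R i j
      = ∑ i, ystar i * R i j + ∑ i, ul i * R i j := by
    intro j
    rw [← Finset.sum_add_distrib]
    exact Finset.sum_congr rfl fun i _ => by ring
  have hfeas' : Dfeas R A JI KI (fun i => ystar i + ul i) zstar := by
    obtain ⟨hdin, hdserv, hsum1, hznn'⟩ := hD.1.1
    exact ⟨fun j hj => by rw [hsplit j]; linarith [hdin j hj, hineq j],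
      fun j hj => by rw [hsplit j]; linarith [hdserv j hj, hineq j],
      hsum1, hznn'⟩
  have hopt' : Dopt R A JI KI (fun i => ystar i + ul i) zstar :=
    ⟨hfeas', fun y' z' hf => hD.1.2 y' z' hf⟩
  have heq := (hD.2 _ _ hopt').1
  have hzero : ul = 0 := by
    funext i
    have := congrFun heq i
    simp only [Pi.zero_apply]
    linarith [this]
  rw [hzero, norm_zero] at hn1
  norm_num at hn1

end Aux
open Filter in
/-- Lemma 1: convergence of the dual optimal solutions `(y^r, z^r)` to the dual
optimal solution `(y*, z*)` of the limit network. -/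
theorem dual_opt_convergence {I J K : Type*} [Fintype I] [Fintype J] [Fintype K] [DecidableEq J] [DecidableEq K]
    (R : I → J → ℝ) (A : K → J → ℝ) (JI : Finset J) (KI : Finset K)
    (hND : NetData A JI KI)
    (Rseq : ℕ → I → J → ℝ)
    (hconv : ∀ i j, Tendsto (fun r => Rseq r i j) atTop (nhds (R i j)))
    (xstar : J → ℝ) (hSPP : SPPuniqueOpt R A KI 1 xstar)
    (yr : ℕ → I → ℝ) (zr : ℕ → K → ℝ)
    (hDr : ∀ r, DuniqueOpt (Rseq r) A JI KI (yr r) (zr r))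
    (hyrnn : ∀ r i, 0 ≤ yr r i) (hzrnn : ∀ r k, 0 ≤ zr r k)
    (ρr : ℕ → ℝ) (hρr : ∀ r, ∃ x, SPPopt (Rseq r) A KI (ρr r) x)
    (hρconv : Tendsto ρr atTop (nhds 1))
    (ystar : I → ℝ) (zstar : K → ℝ) (hD : DuniqueOpt R A JI KI ystar zstar)
    (hynn : ∀ i, 0 ≤ ystar i) (hznn : ∀ k, 0 ≤ zstar k) :
    (∀ i, Tendsto (fun r => yr r i) atTop (nhds (ystar i))) ∧
    (∀ k, Tendsto (fun r => zr r k) atTop (nhds (zstar k))) := by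
  classical
  obtain ⟨Cz, hCz0, hCz⟩ := z_bounded hND (fun r => (hDr r).1.1) hzrnn hρr hρconv
  obtain ⟨Cy, hCy⟩ := y_bounded hND hconv (fun r => (hDr r).1.1) hyrnn hzrnn hCz0 hCz hD
  set C0 : ℝ := max Cy Cz with hC0def
  set v : ℕ → (I → ℝ) × (K → ℝ) := fun r => (yr r, zr r) with hvdef
  have hvmem : ∀ r, v r ∈ Metric.closedBall (0 : (I → ℝ) × (K → ℝ)) C0 := by
    intro r
    rw [Metric.mem_closedBall, dist_zero_right, Prod.norm_def]
    apply max_le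
    · exact le_trans (hCy r) (le_max_left _ _)
    · refine le_trans ?_ (le_max_right Cy Cz)
      rw [pi_norm_le_iff_of_nonneg hCz0]
      intro k
      rw [Real.norm_eq_abs, abs_le]
      exact ⟨le_trans (by linarith [hCz r k, hzrnn r k]) (hzrnn r k), hCz r k⟩
  have key : Tendsto v atTop (nhds (ystar, zstar)) := by
    apply tendsto_of_subseq_tendsto
    intro ns hns
    obtain ⟨p, _, ms, hmsmono, hmslim⟩ :=
      (isCompact_closedBall (0 : (I → ℝ) × (K → ℝ)) C0).tendsto_subseq (fun n => hvmem (ns n))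
    refine ⟨ms, ?_⟩
    have hσtop : Tendsto (fun n => ns (ms n)) atTop atTop := hns.comp hmsmono.tendsto_atTop
    have hylim : ∀ i, Tendsto (fun n => yr (ns (ms n)) i) atTop (nhds (p.1 i)) := fun i =>
      (((continuous_apply i).comp continuous_fst).tendsto p).comp hmslim
    have hzlim : ∀ k, Tendsto (fun n => zr (ns (ms n)) k) atTop (nhds (p.2 k)) := fun k =>
      (((continuous_apply k).comp continuous_snd).tendsto p).comp hmslim
    -- the limit point is dual feasible
    have hfeas : Dfeas R A JI KI p.1 p.2 := by
      refine ⟨fun j hj => ?_, fun j hj => ?_, ?_, fun k hk => ?_⟩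
      · refine le_of_tendsto_of_tendsto'
          (tendsto_finset_sum _ fun i _ => (hylim i).mul ((hconv i j).comp hσtop))
          (Filter.Tendsto.neg (tendsto_finset_sum _ fun k _ => (hzlim k).mul tendsto_const_nhds))
          (fun n => ?_)
        exact ((hDr (ns (ms n))).1.1.1 j hj)
      · refine le_of_tendsto_of_tendsto'
          (tendsto_finset_sum _ fun i _ => (hylim i).mul ((hconv i j).comp hσtop))
          (tendsto_finset_sum _ fun k _ => (hzlim k).mul tendsto_const_nhds)
          (fun n => ?_)
        exact ((hDr (ns (ms n))).1.1.2.1 j hj)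
      · refine tendsto_nhds_unique (tendsto_finset_sum _ fun k _ => hzlim k) ?_
        have : (fun n => ∑ k ∈ KIᶜ, zr (ns (ms n)) k) = fun _ => (1:ℝ) := by
          funext n
          exact (hDr (ns (ms n))).1.1.2.2.1
        rw [this]
        exact tendsto_const_nhds
      · exact ge_of_tendsto (hzlim k) (Filter.Eventually.of_forall fun n => hzrnn _ k)
    -- the limit point attains the optimal value
    have hval_ge : ∑ k ∈ KI, zstar k ≤ ∑ k ∈ KI, p.2 k := by
      have hlimsum : Tendsto (fun n => ∑ k ∈ KI, zr (ns (ms n)) k) atTop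
          (nhds (∑ k ∈ KI, p.2 k)) := tendsto_finset_sum _ fun k _ => hzlim k
      by_contra hlt
      push_neg at hlt
      set ε := (∑ k ∈ KI, zstar k - ∑ k ∈ KI, p.2 k) / 2 with hεdef
      have hεpos : 0 < ε := by rw [hεdef]; linarith
      have hev := value_lower hND hD.1.1 hznn hconv (fun r => (hDr r).1) ε hεpos
      have hge : ∑ k ∈ KI, zstar k - ε ≤ ∑ k ∈ KI, p.2 k :=
        ge_of_tendsto hlimsum (hσtop.eventually hev)
      rw [hεdef] at hge
      linarith
    have hopt : Dopt R A JI KI p.1 p.2 :=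
      ⟨hfeas, fun y' z' hf => le_trans (hD.1.2 y' z' hf) hval_ge⟩
    obtain ⟨hy, hz⟩ := hD.2 _ _ hopt
    have hp : p = (ystar, zstar) := by
      rw [Prod.ext_iff]
      exact ⟨hy, hz⟩
    rw [← hp]
    exact hmslim
  constructor
  · intro i
    exact (((continuous_apply i).comp continuous_fst).tendsto _).comp key
  · intro k
    exact (((continuous_apply k).comp continuous_snd).tendsto _).comp key
end

section
/- Let (R, A) be network data whose static planning problem has optimal objective value ρ and whose dual problem has a unique optimal solution (y, z), which is nonnegative. Let T : [0,∞) → ℝ^𝒥 be any function with T(0) = 0 such that for all 0 ≤ t₁ < t₂ the vector (T(t₂) − T(t₁))/(t₂ − t₁) lies in the allocation set 𝒜. Then the function Y(t) := (1 − ρ)t − Σ_{i∈ℐ} y_i (R T(t))_i is nondecreasing on [0,∞) and satisfies Y(0) = 0. -/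
open Finset

section Helpers

variable {I J K : Type*} [Fintype I] [Fintype J] [Fintype K] [DecidableEq J] [DecidableEq K]

/-- Weak-duality style bound: the "network pressure" of any allocation is at most
`1 - ∑_{k ∈ KI} z k` for any dual feasible `(y, z)`. -/
lemma pressure_le_of_dfeas (R : I → J → ℝ) (A : K → J → ℝ) (JI : Finset J) (KI : Finset K)
    (hND : NetData A JI KI) (y : I → ℝ) (z : K → ℝ) (hf : Dfeas R A JI KI y z)
    (a : J → ℝ) (ha : a ∈ Alloc A KI) :
    ∑ i, y i * ∑ j, R i j * a j ≤ 1 - ∑ k ∈ KI, z k := by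
  obtain ⟨ha0, ha1, ha2⟩ := ha
  obtain ⟨hin, hsv, hz1, hz0⟩ := hf
  have hA0 : ∀ k j, 0 ≤ A k j := by
    intro k j; rcases hND.1 k j with h | h <;> rw [h] <;> norm_num
  have hswap : ∑ i, y i * ∑ j, R i j * a j = ∑ j, (∑ i, y i * R i j) * a j := by
    simp_rw [Finset.mul_sum, Finset.sum_mul, mul_assoc]
    exact Finset.sum_comm
  rw [hswap, ← Finset.sum_add_sum_compl JI (fun j => (∑ i, y i * R i j) * a j)]
  have hIn : ∑ j ∈ JI, (∑ i, y i * R i j) * a j ≤ - ∑ k ∈ KI, z k := by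
    have h1 : ∑ j ∈ JI, (∑ i, y i * R i j) * a j
        ≤ ∑ j ∈ JI, (- ∑ k ∈ KI, z k * A k j) * a j :=
      Finset.sum_le_sum fun j hj => mul_le_mul_of_nonneg_right (hin j hj) (ha0 j)
    have h2 : ∑ j ∈ JI, (- ∑ k ∈ KI, z k * A k j) * a j
        = - ∑ k ∈ KI, z k * ∑ j ∈ JI, A k j * a j := by
      simp_rw [neg_mul, Finset.sum_neg_distrib, Finset.sum_mul, Finset.mul_sum]
      rw [Finset.sum_comm]
      simp_rw [mul_assoc]
    have h3 : ∀ k ∈ KI, ∑ j ∈ JI, A k j * a j = 1 := by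
      intro k hk
      rw [← ha2 k hk]
      refine Finset.sum_subset (Finset.subset_univ JI) ?_
      intro j _ hj
      rw [hND.2.1 k j (Or.inl ⟨hk, hj⟩), zero_mul]
    rw [h2] at h1
    have h4 : ∑ k ∈ KI, z k * ∑ j ∈ JI, A k j * a j = ∑ k ∈ KI, z k := by
      refine Finset.sum_congr rfl fun k hk => ?_
      rw [h3 k hk, mul_one]
    rw [h4] at h1
    exact h1
  have hSv : ∑ j ∈ JIᶜ, (∑ i, y i * R i j) * a j ≤ 1 := by
    have h1 : ∑ j ∈ JIᶜ, (∑ i, y i * R i j) * a j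
        ≤ ∑ j ∈ JIᶜ, (∑ k ∈ KIᶜ, z k * A k j) * a j :=
      Finset.sum_le_sum fun j hj =>
        mul_le_mul_of_nonneg_right (hsv j (Finset.mem_compl.mp hj)) (ha0 j)
    have h2 : ∑ j ∈ JIᶜ, (∑ k ∈ KIᶜ, z k * A k j) * a j
        = ∑ k ∈ KIᶜ, z k * ∑ j ∈ JIᶜ, A k j * a j := by
      simp_rw [Finset.sum_mul, Finset.mul_sum]
      rw [Finset.sum_comm]
      simp_rw [mul_assoc]
    have h3 : ∀ k ∈ KIᶜ, ∑ j ∈ JIᶜ, A k j * a j ≤ 1 := by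
      intro k hk
      have heq : ∑ j ∈ JIᶜ, A k j * a j = ∑ j, A k j * a j := by
        refine Finset.sum_subset (Finset.subset_univ JIᶜ) ?_
        intro j _ hj
        rw [Finset.mem_compl, not_not] at hj
        rw [hND.2.1 k j (Or.inr ⟨Finset.mem_compl.mp hk, hj⟩), zero_mul]
      rw [heq]; exact ha1 k
    calc ∑ j ∈ JIᶜ, (∑ i, y i * R i j) * a j
        ≤ ∑ k ∈ KIᶜ, z k * ∑ j ∈ JIᶜ, A k j * a j := h1.trans_eq h2
      _ ≤ ∑ k ∈ KIᶜ, z k * 1 := Finset.sum_le_sum fun k hk =>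
            mul_le_mul_of_nonneg_left (h3 k hk) (hz0 k (Finset.mem_compl.mp hk))
      _ = 1 := by simp_rw [mul_one]; exact hz1
  linarith

/-- Strong duality direction: the optimal primal value is at most the optimal dual value. -/
lemma rho_le_dualval (R : I → J → ℝ) (A : K → J → ℝ) (JI : Finset J) (KI : Finset K)
    (hND : NetData A JI KI) (ρ : ℝ) (hSPP : ∃ x, SPPopt R A KI ρ x)
    (y : I → ℝ) (z : K → ℝ) (hD : Dopt R A JI KI y z) :
    ρ ≤ ∑ k ∈ KI, z k := by
  classical
  by_contra hlt
  push_neg at hlt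
  set V : ℝ := ∑ k ∈ KI, z k with hV
  have hA0 : ∀ k j, 0 ≤ A k j := by
    intro k j; rcases hND.1 k j with h | h <;> rw [h] <;> norm_num
  -- the convex set of "achievable right-hand sides"
  set M : Set ((I → ℝ) × (K → ℝ)) :=
    {m | ∃ x : J → ℝ, (∀ j, 0 ≤ x j) ∧ (∀ i, m.1 i = ∑ j, R i j * x j) ∧
      (∀ k ∈ KI, m.2 k = ∑ j, A k j * x j) ∧ (∀ k ∉ KI, ∑ j, A k j * x j ≤ m.2 k)} with hM
  -- the target point
  set p₀ : (I → ℝ) × (K → ℝ) := (0, fun k => if k ∈ KI then 1 else V) with hp₀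
  have hMconv : Convex ℝ M := by
    rintro m ⟨x, hx0, hx1, hx2, hx3⟩ m' ⟨x', hx0', hx1', hx2', hx3'⟩ θ τ hθ hτ hθτ
    have hsumlin : ∀ c : J → ℝ, ∑ j, c j * (θ * x j + τ * x' j)
        = θ * ∑ j, c j * x j + τ * ∑ j, c j * x' j := by
      intro c
      rw [Finset.mul_sum, Finset.mul_sum, ← Finset.sum_add_distrib]
      exact Finset.sum_congr rfl fun j _ => by ring
    refine ⟨fun j => θ * x j + τ * x' j,
      fun j => add_nonneg (mul_nonneg hθ (hx0 j)) (mul_nonneg hτ (hx0' j)), ?_, ?_, ?_⟩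
    · intro i
      simp only [Prod.fst_add, Prod.smul_fst, Pi.add_apply, Pi.smul_apply, smul_eq_mul]
      rw [hsumlin, hx1 i, hx1' i]
    · intro k hk
      simp only [Prod.snd_add, Prod.smul_snd, Pi.add_apply, Pi.smul_apply, smul_eq_mul]
      rw [hsumlin, hx2 k hk, hx2' k hk]
    · intro k hk
      simp only [Prod.snd_add, Prod.smul_snd, Pi.add_apply, Pi.smul_apply, smul_eq_mul]
      rw [hsumlin]
      exact add_le_add (mul_le_mul_of_nonneg_left (hx3 k hk) hθ)
        (mul_le_mul_of_nonneg_left (hx3' k hk) hτ)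
  -- M is closed, by a compactness argument
  have hMclosed : IsClosed M := by
    refine IsSeqClosed.isClosed ?_
    intro mseq m hmem htends
    choose x hx0 hx1 hx2 hx3 using hmem
    choose kj hkj using hND.2.2
    have hfst : Filter.Tendsto (fun n => (mseq n).1) Filter.atTop (nhds m.1) :=
      (continuous_fst.tendsto m).comp htends
    have hsnd : Filter.Tendsto (fun n => (mseq n).2) Filter.atTop (nhds m.2) :=
      (continuous_snd.tendsto m).comp htends
    have h1t : ∀ i, Filter.Tendsto (fun n => (mseq n).1 i) Filter.atTop (nhds (m.1 i)) :=
      fun i => ((continuous_apply i).tendsto m.1).comp hfst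
    have h2t : ∀ k, Filter.Tendsto (fun n => (mseq n).2 k) Filter.atTop (nhds (m.2 k)) :=
      fun k => ((continuous_apply k).tendsto m.2).comp hsnd
    have hxle : ∀ n j, x n j ≤ (mseq n).2 (kj j) := by
      intro n j
      have hsum : x n j ≤ ∑ j', A (kj j) j' * x n j' := by
        have h : A (kj j) j * x n j ≤ ∑ j', A (kj j) j' * x n j' :=
          Finset.single_le_sum (f := fun j' => A (kj j) j' * x n j')
            (fun j' _ => mul_nonneg (hA0 _ _) (hx0 n j')) (Finset.mem_univ j)
        rwa [hkj j, one_mul] at h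
      by_cases h : kj j ∈ KI
      · rw [hx2 n (kj j) h]; exact hsum
      · exact hsum.trans (hx3 n (kj j) h)
    have hB : ∀ j, ∃ B, ∀ n, x n j ≤ B := by
      intro j
      obtain ⟨B, hBmem⟩ := (h2t (kj j)).bddAbove_range
      exact ⟨B, fun n => (hxle n j).trans (hBmem (Set.mem_range_self n))⟩
    choose B hBle using hB
    have hcpt : IsCompact (Set.Icc (0 : J → ℝ) B) := isCompact_Icc
    obtain ⟨xl, hxlS, φ, hφ, hxtend⟩ := hcpt.tendsto_subseq
      (fun n => Set.mem_Icc.mpr ⟨fun j => hx0 n j, fun j => hBle j n⟩)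
    have hxj : ∀ j, Filter.Tendsto (fun n => x (φ n) j) Filter.atTop (nhds (xl j)) :=
      fun j => ((continuous_apply j).tendsto xl).comp hxtend
    refine ⟨xl, fun j => (Set.mem_Icc.mp hxlS).1 j, ?_, ?_, ?_⟩
    · intro i
      have key : Filter.Tendsto (fun n => (mseq (φ n)).1 i) Filter.atTop
          (nhds (∑ j, R i j * xl j)) := by
        have h := tendsto_finset_sum Finset.univ
          (fun j (_ : j ∈ Finset.univ) => (hxj j).const_mul (R i j))
        exact h.congr fun n => (hx1 (φ n) i).symm
      exact tendsto_nhds_unique ((h1t i).comp hφ.tendsto_atTop) key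
    · intro k hk
      have key : Filter.Tendsto (fun n => (mseq (φ n)).2 k) Filter.atTop
          (nhds (∑ j, A k j * xl j)) := by
        have h := tendsto_finset_sum Finset.univ
          (fun j (_ : j ∈ Finset.univ) => (hxj j).const_mul (A k j))
        exact h.congr fun n => (hx2 (φ n) k hk).symm
      exact tendsto_nhds_unique ((h2t k).comp hφ.tendsto_atTop) key
    · intro k hk
      have key : Filter.Tendsto (fun n => ∑ j, A k j * x (φ n) j) Filter.atTop
          (nhds (∑ j, A k j * xl j)) :=
        tendsto_finset_sum Finset.univ
          (fun j (_ : j ∈ Finset.univ) => (hxj j).const_mul (A k j))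
      exact le_of_tendsto_of_tendsto key ((h2t k).comp hφ.tendsto_atTop)
        (Filter.Eventually.of_forall fun n => hx3 (φ n) k hk)
  -- the target point is not in M (otherwise the primal value could be improved)
  have hP0 : p₀ ∉ M := by
    rintro ⟨x, hx0, hx1, hx2, hx3⟩
    obtain ⟨x₀, hopt⟩ := hSPP
    have hfeas : SPPfeas R A KI V x := by
      refine ⟨fun i => ?_, fun k hk => ?_, fun k hk => ?_, hx0⟩
      · have := hx1 i; simp only [hp₀, Pi.zero_apply] at this; exact this.symm
      · have := hx2 k hk; simp only [hp₀, if_pos hk] at this; exact this.symm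
      · have := hx3 k hk; simpa only [hp₀, if_neg hk] using this
    exact absurd (hopt.2 V x hfeas) (not_le.mpr hlt)
  -- separate p₀ from M
  obtain ⟨f, u, hfu, hup⟩ := geometric_hahn_banach_closed_point hMconv hMclosed hP0
  set y' : I → ℝ := fun i => f ((Pi.single i 1 : I → ℝ), (0 : K → ℝ)) with hy'
  set w : K → ℝ := fun k => f ((0 : I → ℝ), (Pi.single k 1 : K → ℝ)) with hw'
  have hf : ∀ p : (I → ℝ) × (K → ℝ), f p = ∑ i, p.1 i * y' i + ∑ k, p.2 k * w k := by
    intro p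
    have hp : p = (∑ i, p.1 i • (((Pi.single i 1 : I → ℝ), (0 : K → ℝ)) : (I → ℝ) × (K → ℝ)))
        + ∑ k, p.2 k • (((0 : I → ℝ), (Pi.single k 1 : K → ℝ)) : (I → ℝ) × (K → ℝ)) := by
      refine Prod.ext ?_ ?_
      · funext i
        simp [Prod.fst_sum, Prod.snd_sum, Finset.sum_apply, Pi.single_apply, mul_ite]
      · funext k
        simp [Prod.fst_sum, Prod.snd_sum, Finset.sum_apply, Pi.single_apply, mul_ite]
    conv_lhs => rw [hp]
    simp only [map_add, map_sum, map_smul, smul_eq_mul]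
    rfl
  have hu0 : 0 < u := by
    have h0M : (0 : (I → ℝ) × (K → ℝ)) ∈ M := by
      refine ⟨fun _ => 0, fun j => le_refl 0, ?_, ?_, ?_⟩ <;> simp
    have := hfu 0 h0M
    rwa [map_zero] at this
  have hkey : ∀ c : ℝ, (∀ t : ℝ, 0 < t → t * c < u) → c ≤ 0 := by
    intro c hc
    by_contra hpos
    push_neg at hpos
    have ht : (0 : ℝ) < (u + 1) / c := by positivity
    have := hc _ ht
    rw [div_mul_cancel₀ _ (ne_of_gt hpos)] at this
    linarith
  -- nonpositivity of the multipliers on service processors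
  have hwle : ∀ k, k ∉ KI → w k ≤ 0 := by
    intro k hk
    refine hkey _ fun t ht => ?_
    have hmem : (((0 : I → ℝ), fun k' => if k' = k then t else 0) : (I → ℝ) × (K → ℝ)) ∈ M := by
      refine ⟨fun _ => 0, fun j => le_refl 0, by simp, ?_, ?_⟩
      · intro k' hk'
        have : k' ≠ k := fun h => hk (h ▸ hk')
        simp [this]
      · intro k' _
        simp only [mul_zero, Finset.sum_const_zero]
        show (0:ℝ) ≤ if k' = k then t else 0
        split
        · exact le_of_lt ht
        · exact le_refl 0
    have := hfu _ hmem
    rw [hf] at this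
    simpa [Finset.sum_ite_eq', mul_comm] using this
  -- the column constraints
  have hcol : ∀ j, ∑ i, R i j * y' i + ∑ k, A k j * w k ≤ 0 := by
    intro j
    refine hkey _ fun t ht => ?_
    have hmem : ((fun i => t * R i j, fun k => t * A k j) : (I → ℝ) × (K → ℝ)) ∈ M := by
      refine ⟨fun j' => if j' = j then t else 0,
        fun j' => by by_cases h' : j' = j <;> simp [h', le_of_lt ht], ?_, ?_, ?_⟩
      · intro i
        simp [mul_ite, Finset.sum_ite_eq', mul_comm]
      · intro k _
        simp [mul_ite, Finset.sum_ite_eq', mul_comm]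
      · intro k _
        simp [mul_ite, Finset.sum_ite_eq', mul_comm]
    have h := hfu _ hmem
    rw [hf] at h
    dsimp only at h
    have heq : ∑ i, (t * R i j) * y' i + ∑ k, (t * A k j) * w k
        = t * (∑ i, R i j * y' i + ∑ k, A k j * w k) := by
      rw [mul_add, Finset.mul_sum, Finset.mul_sum]
      congr 1 <;> exact Finset.sum_congr rfl fun _ _ => by ring
    rwa [heq] at h
  -- the value of f at p₀
  have hP0val : u < ∑ k ∈ KI, w k + V * ∑ k ∈ KIᶜ, w k := by
    have h := hup
    rw [hf] at h
    have heq : ∑ i, (p₀.1 : I → ℝ) i * y' i + ∑ k, p₀.2 k * w k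
        = ∑ k ∈ KI, w k + V * ∑ k ∈ KIᶜ, w k := by
      simp only [hp₀, Pi.zero_apply, zero_mul, Finset.sum_const_zero, zero_add]
      rw [← Finset.sum_add_sum_compl KI (fun k => (if k ∈ KI then 1 else V) * w k)]
      congr 1
      · exact Finset.sum_congr rfl fun k hk => by rw [if_pos hk, one_mul]
      · rw [Finset.mul_sum]
        exact Finset.sum_congr rfl fun k hk => by
          rw [if_neg (Finset.mem_compl.mp hk)]
    rwa [heq] at h
  obtain ⟨⟨hin, hsv, hz1, hz0⟩, hmax⟩ := hD
  set σ : ℝ := ∑ k ∈ KIᶜ, (- w k) with hσdef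
  have hσ0 : 0 ≤ σ :=
    Finset.sum_nonneg fun k hk => neg_nonneg.mpr (hwle k (Finset.mem_compl.mp hk))
  have hsumw : ∑ k ∈ KIᶜ, w k = -σ := by
    rw [hσdef, Finset.sum_neg_distrib, neg_neg]
  -- splitting the column constraints between input and service processors
  have hinA : ∀ j ∈ JI, ∑ i, y' i * R i j ≤ - ∑ k ∈ KI, w k * A k j := by
    intro j hj
    have h := hcol j
    have hz : ∑ k ∈ KIᶜ, A k j * w k = 0 :=
      Finset.sum_eq_zero fun k hk => by
        rw [hND.2.1 k j (Or.inr ⟨Finset.mem_compl.mp hk, hj⟩), zero_mul]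
    rw [← Finset.sum_add_sum_compl KI (fun k => A k j * w k), hz, add_zero] at h
    have e1 : ∑ i, y' i * R i j = ∑ i, R i j * y' i :=
      Finset.sum_congr rfl fun _ _ => mul_comm _ _
    have e2 : ∑ k ∈ KI, w k * A k j = ∑ k ∈ KI, A k j * w k :=
      Finset.sum_congr rfl fun _ _ => mul_comm _ _
    rw [e1, e2]; linarith
  have hsvA : ∀ j, j ∉ JI → ∑ i, y' i * R i j ≤ - ∑ k ∈ KIᶜ, w k * A k j := by
    intro j hj
    have h := hcol j
    have hz : ∑ k ∈ KI, A k j * w k = 0 :=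
      Finset.sum_eq_zero fun k hk => by
        rw [hND.2.1 k j (Or.inl ⟨hk, hj⟩), zero_mul]
    rw [← Finset.sum_add_sum_compl KI (fun k => A k j * w k), hz, zero_add] at h
    have e1 : ∑ i, y' i * R i j = ∑ i, R i j * y' i :=
      Finset.sum_congr rfl fun _ _ => mul_comm _ _
    have e2 : ∑ k ∈ KIᶜ, w k * A k j = ∑ k ∈ KIᶜ, A k j * w k :=
      Finset.sum_congr rfl fun _ _ => mul_comm _ _
    rw [e1, e2]; linarith
  rcases eq_or_lt_of_le hσ0 with hσ | hσ
  · -- σ = 0 : dual objective is unbounded, contradiction with optimality of (y, z)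
    have hw0 : ∀ k ∈ KIᶜ, w k = 0 := by
      intro k hk
      have h := (Finset.sum_eq_zero_iff_of_nonneg
        (fun k hk => neg_nonneg.mpr (hwle k (Finset.mem_compl.mp hk)))).mp hσ.symm k hk
      linarith [h]
    have hsum0 : ∑ k ∈ KIᶜ, w k = 0 := Finset.sum_eq_zero hw0
    set y₁ : I → ℝ := fun i => y i + y' i with hy₁
    set z₁ : K → ℝ := fun k => z k + if k ∈ KI then w k else 0 with hz₁
    have hfeas1 : Dfeas R A JI KI y₁ z₁ := by
      refine ⟨?_, ?_, ?_, ?_⟩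
      · intro j hj
        have e1 : ∑ i, y₁ i * R i j = ∑ i, y i * R i j + ∑ i, y' i * R i j := by
          rw [← Finset.sum_add_distrib]
          exact Finset.sum_congr rfl fun i _ => by rw [hy₁]; ring
        have e2 : ∑ k ∈ KI, z₁ k * A k j
            = ∑ k ∈ KI, z k * A k j + ∑ k ∈ KI, w k * A k j := by
          rw [← Finset.sum_add_distrib]
          refine Finset.sum_congr rfl fun k hk => ?_
          rw [hz₁]; simp only [if_pos hk]; ring
        rw [e1, e2]
        have h1 := hin j hj
        have h2 := hinA j hj
        linarith
      · intro j hj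
        have e1 : ∑ i, y₁ i * R i j = ∑ i, y i * R i j + ∑ i, y' i * R i j := by
          rw [← Finset.sum_add_distrib]
          exact Finset.sum_congr rfl fun i _ => by rw [hy₁]; ring
        have e2 : ∑ k ∈ KIᶜ, z₁ k * A k j = ∑ k ∈ KIᶜ, z k * A k j := by
          refine Finset.sum_congr rfl fun k hk => ?_
          rw [hz₁]; simp only [if_neg (Finset.mem_compl.mp hk)]; ring
        rw [e1, e2]
        have h1 := hsv j hj
        have h2 := hsvA j hj
        have h3 : ∑ k ∈ KIᶜ, w k * A k j = 0 :=
          Finset.sum_eq_zero fun k hk => by rw [hw0 k hk, zero_mul]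
        linarith
      · have e : ∑ k ∈ KIᶜ, z₁ k = ∑ k ∈ KIᶜ, z k := by
          refine Finset.sum_congr rfl fun k hk => ?_
          rw [hz₁]; simp only [if_neg (Finset.mem_compl.mp hk)]; ring
        rw [e]; exact hz1
      · intro k hk
        have : z₁ k = z k := by rw [hz₁]; simp only [if_neg hk]; ring
        rw [this]; exact hz0 k hk
    have hle := hmax y₁ z₁ hfeas1
    have hobj : ∑ k ∈ KI, z₁ k = V + ∑ k ∈ KI, w k := by
      rw [hV, ← Finset.sum_add_distrib]
      refine Finset.sum_congr rfl fun k hk => ?_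
      rw [hz₁]; simp only [if_pos hk]
    rw [hobj] at hle
    rw [hsum0, mul_zero, add_zero] at hP0val
    linarith
  · -- σ > 0 : rescale to get a dual feasible point with objective above V
    set y₂ : I → ℝ := fun i => y' i * σ⁻¹ with hy₂
    set z₂ : K → ℝ := fun k => (if k ∈ KI then w k else -w k) * σ⁻¹ with hz₂
    have hσinv : (0 : ℝ) ≤ σ⁻¹ := inv_nonneg.mpr hσ0
    have hfeas2 : Dfeas R A JI KI y₂ z₂ := by
      refine ⟨?_, ?_, ?_, ?_⟩
      · intro j hj
        have e1 : ∑ i, y₂ i * R i j = (∑ i, y' i * R i j) * σ⁻¹ := by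
          rw [Finset.sum_mul]
          exact Finset.sum_congr rfl fun i _ => by rw [hy₂]; ring
        have e2 : ∑ k ∈ KI, z₂ k * A k j = (∑ k ∈ KI, w k * A k j) * σ⁻¹ := by
          rw [Finset.sum_mul]
          refine Finset.sum_congr rfl fun k hk => ?_
          rw [hz₂]; simp only [if_pos hk]; ring
        rw [e1, e2, ← neg_mul]
        exact mul_le_mul_of_nonneg_right (hinA j hj) hσinv
      · intro j hj
        have e1 : ∑ i, y₂ i * R i j = (∑ i, y' i * R i j) * σ⁻¹ := by
          rw [Finset.sum_mul]
          exact Finset.sum_congr rfl fun i _ => by rw [hy₂]; ring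
        have e2 : ∑ k ∈ KIᶜ, z₂ k * A k j = (- ∑ k ∈ KIᶜ, w k * A k j) * σ⁻¹ := by
          rw [← Finset.sum_neg_distrib, Finset.sum_mul]
          refine Finset.sum_congr rfl fun k hk => ?_
          rw [hz₂]; simp only [if_neg (Finset.mem_compl.mp hk)]; ring
        rw [e1, e2]
        exact mul_le_mul_of_nonneg_right (hsvA j hj) hσinv
      · have e : ∑ k ∈ KIᶜ, z₂ k = σ * σ⁻¹ := by
          rw [hσdef, Finset.sum_mul]
          refine Finset.sum_congr rfl fun k hk => ?_
          rw [hz₂]; simp only [if_neg (Finset.mem_compl.mp hk)]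
          rfl
        rw [e, mul_inv_cancel₀ (ne_of_gt hσ)]
      · intro k hk
        rw [hz₂]; simp only [if_neg hk]
        exact mul_nonneg (neg_nonneg.mpr (hwle k hk)) hσinv
    have hle := hmax y₂ z₂ hfeas2
    have hobj : ∑ k ∈ KI, z₂ k = (∑ k ∈ KI, w k) * σ⁻¹ := by
      rw [Finset.sum_mul]
      refine Finset.sum_congr rfl fun k hk => ?_
      rw [hz₂]; simp only [if_pos hk]
    rw [hobj] at hle
    rw [hsumw] at hP0val
    have h1 : V * σ < ∑ k ∈ KI, w k := by nlinarith
    have h2 : V < (∑ k ∈ KI, w k) * σ⁻¹ := by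
      have := mul_lt_mul_of_pos_right h1 (inv_pos.mpr hσ)
      rwa [mul_assoc, mul_inv_cancel₀ (ne_of_gt hσ), mul_one] at this
    linarith

end Helpers

/-- Lemma 2: the deviation process
`Y(t) = (1 - ρ) t - ∑ᵢ yᵢ (R T(t))ᵢ` is nondecreasing and starts at `0`. -/
theorem deviation_nondecreasing {I J K : Type*} [Fintype I] [Fintype J] [Fintype K] [DecidableEq J] [DecidableEq K]
    (R : I → J → ℝ) (A : K → J → ℝ) (JI : Finset J) (KI : Finset K)
    (hND : NetData A JI KI)
    (ρ : ℝ) (hSPP : ∃ x, SPPopt R A KI ρ x)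
    (y : I → ℝ) (z : K → ℝ) (hD : DuniqueOpt R A JI KI y z)
    (hynn : ∀ i, 0 ≤ y i) (hznn : ∀ k, 0 ≤ z k)
    (T : ℝ → J → ℝ) (hT0 : ∀ j, T 0 j = 0)
    (hTalloc : ∀ t₁ t₂ : ℝ, 0 ≤ t₁ → t₁ < t₂ →
      (fun j => (T t₂ j - T t₁ j) / (t₂ - t₁)) ∈ Alloc A KI) :
    ((1 - ρ) * 0 - ∑ i, y i * ∑ j, R i j * T 0 j = 0) ∧
    ∀ s t : ℝ, 0 ≤ s → s ≤ t →
      (1 - ρ) * s - ∑ i, y i * ∑ j, R i j * T s j ≤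
        (1 - ρ) * t - ∑ i, y i * ∑ j, R i j * T t j := by
  have hDopt : Dopt R A JI KI y z := hD.1
  have hrho : ρ ≤ ∑ k ∈ KI, z k := rho_le_dualval R A JI KI hND ρ hSPP y z hDopt
  constructor
  · simp [hT0]
  · intro s t hs hst
    rcases eq_or_lt_of_le hst with rfl | hlt
    · exact le_refl _
    · have hts : (0:ℝ) < t - s := sub_pos.mpr hlt
      have hbound : ∑ i, y i * ∑ j, R i j * ((T t j - T s j) / (t - s))
          ≤ 1 - ∑ k ∈ KI, z k := by
        have h := pressure_le_of_dfeas R A JI KI hND y z hDopt.1 _ (hTalloc s t hs hlt)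
        simpa using h
      have key : ∑ i, y i * ∑ j, R i j * T t j - ∑ i, y i * ∑ j, R i j * T s j
          = (t - s) * ∑ i, y i * ∑ j, R i j * ((T t j - T s j) / (t - s)) := by
        rw [← Finset.sum_sub_distrib, Finset.mul_sum]
        refine Finset.sum_congr rfl fun i _ => ?_
        rw [← mul_sub, ← Finset.sum_sub_distrib]
        have hinner : ∑ j, (R i j * T t j - R i j * T s j)
            = (t - s) * ∑ j, R i j * ((T t j - T s j) / (t - s)) := by
          rw [Finset.mul_sum]
          refine Finset.sum_congr rfl fun j _ => ?_
          field_simp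
        rw [hinner]
        ring
      have h1 : ∑ i, y i * ∑ j, R i j * ((T t j - T s j) / (t - s)) ≤ 1 - ρ :=
        le_trans hbound (by linarith)
      have h2 := mul_le_mul_of_nonneg_left h1 (le_of_lt hts)
      have h3 : (t - s) * (1 - ρ) = (1 - ρ) * t - (1 - ρ) * s := by ring
      linarith
end
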